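/- arXiv:1405.3194 — 4 statements merged into one kernel-verified Lean document; each statement's English description precedes it below -/
import Mathlib

section
/- For every positive integer k, ∑_{n=1}^{2k-1} (-1)^n * sin(π n² / (2(2k-1))) = (-1)^k * (1 + √(2k-1))/2. -/
open Finset Real Complex Filter Topology

noncomputable section
set_option maxHeartbeats 2000000

lemma half_cast : (1/2 : ℂ) = ((1/2 : ℝ) : ℂ) := by norm_num

lemma cpow_half_real {x : ℝ} (hx : 0 ≤ x) :
    ((x : ℂ)) ^ (1/2 : ℂ) = ((Real.sqrt x : ℝ) : ℂ) := by
  rw [half_cast, ← Complex.ofReal_cpow hx, Real.sqrt_eq_rpow]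

-- B: FE for the inner thetas

lemma theta_FE_inner {c : ℝ} (hc : 0 < c) {ε : ℝ} (hε : 0 < ε) (r : ℕ) {t : ℝ}
    (htε : t * (c^2 * ε) = 1) :
    jacobiTheta₂ (I * c * r * ε) (I * c^2 * ε) =
      ((Real.sqrt (c^2*ε) : ℝ) : ℂ)⁻¹ * Complex.exp (π * ε * r^2) *
        jacobiTheta₂ (((r/c : ℝ)) : ℂ) (((0:ℝ):ℂ) + t * I) := by
  have hc' : (c:ℂ) ≠ 0 := by exact_mod_cast hc.ne'
  have hε' : ((ε:ℝ):ℂ) ≠ 0 := by exact_mod_cast hε.ne'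
  have hd : I * (c:ℂ)^2 * (ε:ℂ) ≠ 0 :=
    mul_ne_zero (mul_ne_zero Complex.I_ne_zero (pow_ne_zero 2 hc')) hε'
  have h2 : ((t:ℂ)) * (((c:ℝ):ℂ)^2 * (ε:ℂ)) = 1 := by exact_mod_cast congrArg Complex.ofReal htε
  have h := jacobiTheta₂_functional_equation (I * c * r * ε) (I * c^2 * ε)
  rw [h]
  have e1 : -I * (I * (c:ℂ)^2 * (ε:ℂ)) = ((c^2*ε : ℝ) : ℂ) := by
    push_cast; rw [neg_mul, ← mul_assoc, ← mul_assoc, I_mul_I]; ring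
  have e2 : I * (c:ℂ) * (r:ℂ) * (ε:ℂ) / (I * (c:ℂ)^2 * (ε:ℂ)) = (((r/c : ℝ)) : ℂ) := by
    push_cast
    rw [div_eq_div_iff hd hc']
    ring
  have e3 : (-1 : ℂ) / (I * (c:ℂ)^2 * (ε:ℂ)) = (((0:ℝ):ℂ) + t * I) := by
    rw [div_eq_iff hd]
    push_cast
    linear_combination (-(t:ℂ)*(c:ℂ)^2*(ε:ℂ)) * Complex.I_sq + h2
  have e4 : -(π:ℂ) * I * (I * (c:ℂ) * (r:ℂ) * (ε:ℂ))^2 / (I * (c:ℂ)^2 * (ε:ℂ))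
      = (π:ℂ) * (ε:ℂ) * (r:ℂ)^2 := by
    rw [div_eq_iff hd]
    linear_combination (-(π:ℂ)*I*(c:ℂ)^2*(r:ℂ)^2*(ε:ℂ)^2) * Complex.I_sq
  rw [e1, e2, e3, e4, cpow_half_real (by positivity), one_div]

lemma log_negI : Complex.log (-I) = -(π/2) * I := by
  apply Complex.ext
  · simp [Complex.log_re]
  · simp [Complex.log_im, Complex.arg_neg_I]

lemma negI_cpow_half : (-I : ℂ) ^ (1/2 : ℂ) = Complex.exp (-(π * I) / 4) := by
  rw [Complex.cpow_def_of_ne_zero (by simp [Complex.I_ne_zero]), log_negI]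
  congr 1
  push_cast
  ring

lemma cpow_half_mul' {x y : ℂ} (hx : x ≠ 0) (hy : y ≠ 0)
    (h : Complex.arg x + Complex.arg y ∈ Set.Ioc (-π) π) :
    (x * y) ^ (1/2 : ℂ) = x ^ (1/2 : ℂ) * y ^ (1/2 : ℂ) := by
  rw [Complex.cpow_def_of_ne_zero (mul_ne_zero hx hy), Complex.cpow_def_of_ne_zero hx,
    Complex.cpow_def_of_ne_zero hy, Complex.log_mul hx hy h, ← Complex.exp_add]
  ring_nf

lemma scalar_eval {c : ℝ} (hc : 0 < c) {ε : ℝ} (hε : 0 < ε) :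
    ((Real.sqrt (c^2*ε) : ℝ) : ℂ) *
      (((-I * (((1/c : ℝ):ℂ) + ε * I)) ^ (1/2:ℂ))⁻¹ *
       ((-I * (I * c * ε / (((1/c : ℝ):ℂ) + ε * I))) ^ (1/2:ℂ))⁻¹) =
      ((Real.sqrt c : ℝ) : ℂ) * Complex.exp (π * I / 4) := by
  have hc' : (c:ℂ) ≠ 0 := by exact_mod_cast hc.ne'
  set τ : ℂ := ((1/c : ℝ):ℂ) + ε * I with hτ
  have hτim : τ.im = ε := by simp [hτ]
  have hτre : τ.re = 1/c := by simp [hτ]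
  have hτ0 : τ ≠ 0 := fun h => by rw [h] at hτim; simp at hτim; exact hε.ne hτim
  set a : ℂ := -I * τ with ha
  set w : ℂ := I * c * ε / τ with hw
  have hbe : -I * w = ((c*ε : ℝ):ℂ) / τ := by
    rw [hw]
    push_cast
    linear_combination (-(c:ℂ)*(ε:ℂ)/τ) * Complex.I_sq
  have hare : a.re = ε := by rw [ha]; simp [hτim]
  have hbre : 0 < (-I * w).re := by
    rw [hbe, Complex.div_re]
    push_cast
    simp only [Complex.ofReal_mul, Complex.mul_re, Complex.mul_im, Complex.ofReal_re,
      Complex.ofReal_im]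
    rw [hτre]
    have h1 : (0:ℝ) < Complex.normSq τ := by
      rw [Complex.normSq_pos]; exact hτ0
    have : (c*ε) * (1/c) = ε := by field_simp
    simp only [mul_zero, zero_mul, sub_zero, add_zero, mul_im]
    positivity
  have ha0 : a ≠ 0 := by
    intro h
    rw [h] at hare
    simp at hare
    exact hε.ne' hare.symm
  have hb0 : -I * w ≠ 0 := fun h => by rw [h] at hbre; simp at hbre
  have haarg : |Complex.arg a| < π / 2 :=
    Complex.abs_arg_lt_pi_div_two_iff.mpr (Or.inl (by rw [hare]; exact hε))
  have hbarg : |Complex.arg (-I*w)| < π / 2 :=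
    Complex.abs_arg_lt_pi_div_two_iff.mpr (Or.inl hbre)
  have hmul1 : (a * (-I*w)) ^ (1/2:ℂ) = a ^ (1/2:ℂ) * (-I*w) ^ (1/2:ℂ) := by
    apply cpow_half_mul' ha0 hb0
    constructor
    · have := abs_lt.mp haarg; have := abs_lt.mp hbarg; linarith
    · have := abs_lt.mp haarg; have := abs_lt.mp hbarg; linarith [pi_pos]
  have hab : a * (-I*w) = ((c*ε : ℝ):ℂ) * (-I) := by
    rw [hbe, ha]
    field_simp
  have hmul2 : (((c*ε : ℝ):ℂ) * (-I)) ^ (1/2:ℂ) =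
      (((c*ε : ℝ):ℂ)) ^ (1/2:ℂ) * (-I : ℂ) ^ (1/2:ℂ) := by
    apply cpow_half_mul' (by exact_mod_cast (mul_pos hc hε).ne') (by simp [Complex.I_ne_zero])
    rw [Complex.arg_ofReal_of_nonneg (mul_pos hc hε).le, Complex.arg_neg_I]
    constructor <;> [linarith [pi_pos]; linarith [pi_pos]]
  calc ((Real.sqrt (c^2*ε) : ℝ) : ℂ) * ((a ^ (1/2:ℂ))⁻¹ * ((-I*w) ^ (1/2:ℂ))⁻¹)
      = ((Real.sqrt (c^2*ε) : ℝ) : ℂ) * ((a * (-I*w)) ^ (1/2:ℂ))⁻¹ := by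
        rw [hmul1, mul_inv]
    _ = ((Real.sqrt (c^2*ε) : ℝ) : ℂ) *
          ((((c*ε : ℝ):ℂ)) ^ (1/2:ℂ) * (-I : ℂ) ^ (1/2:ℂ))⁻¹ := by rw [hab, hmul2]
    _ = ((Real.sqrt (c^2*ε) : ℝ) : ℂ) * (((Real.sqrt (c*ε) : ℝ):ℂ))⁻¹ *
          (Complex.exp (-(π * I) / 4))⁻¹ := by
        rw [cpow_half_real (mul_pos hc hε).le, negI_cpow_half, mul_inv]; ring
    _ = ((Real.sqrt c : ℝ) : ℂ) * Complex.exp (π * I / 4) := by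
        rw [← Complex.exp_neg]
        have h1 : Real.sqrt (c^2*ε) = Real.sqrt c * Real.sqrt (c*ε) := by
          rw [← Real.sqrt_mul hc.le]
          congr 1
          ring
        rw [h1]
        have h2 : ((Real.sqrt (c*ε) : ℝ):ℂ) ≠ 0 := by
          exact_mod_cast (Real.sqrt_pos.mpr (mul_pos hc hε)).ne'
        push_cast
        have h3 : ((Real.sqrt c : ℝ):ℂ) ≠ 0 := by
          exact_mod_cast (Real.sqrt_pos.mpr hc).ne'
        have h4 : ((Real.sqrt ε : ℝ):ℂ) ≠ 0 := by
          exact_mod_cast (Real.sqrt_pos.mpr hε).ne'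
        field_simp

lemma theta_periodic (z τ : ℂ) (n : ℕ) : jacobiTheta₂ z (τ + 2 * n) = jacobiTheta₂ z τ := by
  induction n with
  | zero => simp
  | succ n ih =>
      have : τ + 2 * (n + 1 : ℕ) = (τ + 2 * n) + 2 := by push_cast; ring
      rw [this, jacobiTheta₂_add_right, ih]

lemma theta_outer (m : ℕ) (hm : 0 < m) {ε t : ℝ} (hε : 0 < ε)
    (htε : t * ((2*m:ℝ)^2 * ε) = 1) :
    jacobiTheta₂ 0 (((1/(2*m:ℝ) : ℝ):ℂ) + ε * I) =
      ((-I * (((1/(2*m:ℝ) : ℝ):ℂ) + ε * I)) ^ (1/2:ℂ))⁻¹ *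
      ((-I * (I * (2*m:ℝ) * ε / (((1/(2*m:ℝ) : ℝ):ℂ) + ε * I))) ^ (1/2:ℂ))⁻¹ *
      jacobiTheta₂ (((0:ℝ):ℂ)) (((-1/(2*m:ℝ) : ℝ):ℂ) + t * I) := by
  have hc : (0:ℝ) < (2*m:ℝ) := by positivity
  have hc' : ((2*m:ℝ):ℂ) ≠ 0 := by exact_mod_cast hc.ne'
  have hε' : ((ε:ℝ):ℂ) ≠ 0 := by exact_mod_cast hε.ne'
  set c : ℝ := (2*m:ℝ) with hcdef
  set τ : ℂ := ((1/c : ℝ):ℂ) + ε * I with hτ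
  have hτim : τ.im = ε := by simp [hτ]
  have hτ0 : τ ≠ 0 := fun h => by rw [h] at hτim; simp at hτim; exact hε.ne' hτim.symm
  set w : ℂ := I * c * ε / τ with hw
  have hw0 : w ≠ 0 := by
    rw [hw]
    exact div_ne_zero (mul_ne_zero (mul_ne_zero Complex.I_ne_zero hc') hε') hτ0
  have htc : ((t:ℂ)) * (((c:ℝ):ℂ)^2 * (ε:ℂ)) = 1 := by exact_mod_cast congrArg Complex.ofReal htε
  have hcm : (2:ℂ) * ((m:ℕ):ℂ) = ((c:ℝ):ℂ) := by rw [hcdef]; push_cast; ring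
  -- step C
  have h1 := jacobiTheta₂_functional_equation 0 τ
  simp only [zero_div, ne_eq, OfNat.ofNat_ne_zero, not_false_eq_true, zero_pow, mul_zero,
    neg_zero, zero_mul, Complex.exp_zero, mul_one] at h1
  -- step D/E : -1/τ + 2m = w
  have hinv : ((1/c : ℝ):ℂ) = ((c:ℝ):ℂ)⁻¹ := by push_cast; ring
  have h2 : jacobiTheta₂ 0 (-1/τ) = jacobiTheta₂ 0 w := by
    have hDE : (-1/τ) + 2 * ((m:ℕ):ℂ) = w := by
      have key : ((-1/τ) + 2 * ((m:ℕ):ℂ)) * τ = w * τ := by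
        rw [hw, div_mul_cancel₀ _ hτ0, add_mul, div_mul_cancel₀ _ hτ0, hτ, hinv]
        field_simp
        linear_combination ((1:ℂ) + (ε:ℂ)*I*(c:ℂ)) * hcm
      exact mul_right_cancel₀ hτ0 key
    rw [← hDE, theta_periodic]
  -- step F
  have h3 := jacobiTheta₂_functional_equation 0 w
  simp only [zero_div, ne_eq, OfNat.ofNat_ne_zero, not_false_eq_true, zero_pow, mul_zero,
    neg_zero, zero_mul, Complex.exp_zero, mul_one] at h3
  have h4 : (-1 : ℂ)/w = ((-1/c : ℝ):ℂ) + t * I := by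
    have hinv' : ((-1/c : ℝ):ℂ) = -((c:ℝ):ℂ)⁻¹ := by push_cast; ring
    rw [hw, div_div_eq_mul_div, div_eq_iff (mul_ne_zero (mul_ne_zero
      Complex.I_ne_zero hc') hε'), hτ, hinv, hinv']
    field_simp
    linear_combination (-(t:ℂ)*(c:ℂ)^2*(ε:ℂ)) * Complex.I_sq + htc
  rw [h1, h2, h3, h4, one_div, one_div]
  push_cast
  ring

lemma theta_limit (z σ : ℝ) :
    Tendsto (fun t : ℝ => jacobiTheta₂ (z : ℂ) ((σ : ℂ) + t * I)) atTop (𝓝 1) := by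
  have key : Tendsto (fun t : ℝ => ∑' n : ℤ, jacobiTheta₂_term n (z : ℂ) ((σ : ℂ) + t * I))
      atTop (𝓝 (∑' n : ℤ, if n = (0:ℤ) then (1:ℂ) else 0)) := by
    apply tendsto_tsum_of_dominated_convergence (bound := fun n : ℤ => rexp (-π * n ^ 2))
    · have := (summable_jacobiTheta₂_term_iff 0 I).mpr (by simp)
      have h2 := this.norm
      refine h2.congr fun n => ?_
      rw [norm_jacobiTheta₂_term]
      simp
    · intro n
      by_cases hn : n = 0
      · simp [hn, jacobiTheta₂_term]
      · simp only [hn, if_false]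
        rw [tendsto_zero_iff_norm_tendsto_zero]
        simp only [norm_jacobiTheta₂_term]
        have him : ∀ t : ℝ, ((σ : ℂ) + t * I).im = t := by intro t; simp
        simp only [him, Complex.ofReal_im, mul_zero, sub_zero]
        have hn2 : (0:ℝ) < (n:ℝ)^2 := by positivity
        have : Tendsto (fun t : ℝ => -π * n ^ 2 * t) atTop atBot := by
          apply Tendsto.const_mul_atTop_of_neg (by nlinarith [pi_pos]) tendsto_id
        exact Real.tendsto_exp_atBot.comp this
    · filter_upwards [eventually_ge_atTop (1:ℝ)] with t ht n
      rw [norm_jacobiTheta₂_term]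
      simp only [Complex.ofReal_im, mul_zero, sub_zero]
      have him : ((σ : ℂ) + t * I).im = t := by simp
      rw [him]
      apply Real.exp_le_exp.mpr
      nlinarith [mul_nonneg (mul_nonneg pi_pos.le (sq_nonneg (n:ℝ))) (by linarith : (0:ℝ) ≤ t - 1)]
  simpa [jacobiTheta₂, tsum_ite_eq] using key

lemma theta_split (m : ℕ) (hm : 0 < m) {ε : ℝ} (hε : 0 < ε) :
    jacobiTheta₂ 0 ((1/(2*m:ℝ) : ℝ) + ε * I) =
      ∑ r ∈ Finset.range (2*m), Complex.exp (π * I * r^2 / (2*m:ℝ) - π * ε * r^2) *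
        jacobiTheta₂ (I * (2*m:ℝ) * r * ε) (I * (2*m:ℝ)^2 * ε) := by
  haveI : NeZero (2*m) := ⟨by omega⟩
  set c : ℝ := (2*m:ℝ) with hc
  have hc0 : (0:ℝ) < c := by positivity
  set τ : ℂ := ((1/c : ℝ) : ℂ) + ε * I with hτ
  have hτim : 0 < τ.im := by simp [hτ, hε]
  -- summability
  have hsum : Summable fun n : ℤ => jacobiTheta₂_term n 0 τ :=
    (summable_jacobiTheta₂_term_iff 0 τ).mpr hτim
  set e : Fin (2*m) × ℤ ≃ ℤ :=
    (Equiv.prodComm _ _).trans (Int.divModEquiv (2*m)).symm with he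
  have hsum2 : Summable fun p : Fin (2*m) × ℤ => jacobiTheta₂_term (e p) 0 τ :=
    e.summable_iff.mpr hsum
  -- the inner identity
  have key : ∀ (r : ℕ), ∀ q : ℤ, jacobiTheta₂_term (q * (2*m) + r) 0 τ =
      Complex.exp (π * I * r^2 / c - π * ε * r^2) *
        jacobiTheta₂_term q (I * c * r * ε) (I * c^2 * ε) := by
    intro r q
    simp only [jacobiTheta₂_term]
    rw [← Complex.exp_add]
    have h1 : Complex.exp (2 * π * I * ((q * (2*m) + r : ℤ):ℂ) * 0 + π * I * ((q * (2*m) + r : ℤ):ℂ)^2 * τ) =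
        Complex.exp (π * I * r^2 / c - π * ε * r^2 +
          (2 * π * I * q * (I * c * r * ε) + π * I * q^2 * (I * c^2 * ε)) +
          ((q^2 * m + q * r : ℤ) : ℂ) * (2 * π * I)) := by
      congr 1
      have hm0 : (m:ℂ) ≠ 0 := by exact_mod_cast hm.ne'
      rw [hτ, hc]
      push_cast
      field_simp
      ring_nf
      simp only [Complex.I_sq]
      ring
    rw [h1, Complex.exp_add, Complex.exp_int_mul_two_pi_mul_I, mul_one]
  calc jacobiTheta₂ 0 τ = ∑' n : ℤ, jacobiTheta₂_term n 0 τ := rfl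
    _ = ∑' p : Fin (2*m) × ℤ, jacobiTheta₂_term (e p) 0 τ := (e.tsum_eq _).symm
    _ = ∑' (r : Fin (2*m)) (q : ℤ), jacobiTheta₂_term (e (r, q)) 0 τ :=
        Summable.tsum_prod' hsum2 fun r => hsum2.prod_factor r
    _ = ∑ r : Fin (2*m), ∑' q : ℤ, jacobiTheta₂_term (e (r, q)) 0 τ := tsum_fintype _
    _ = ∑ r : Fin (2*m), Complex.exp (π * I * (r:ℕ)^2 / c - π * ε * (r:ℕ)^2) *
        jacobiTheta₂ (I * c * (r:ℕ) * ε) (I * c^2 * ε) := by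
        refine Finset.sum_congr rfl fun r _ => ?_
        have : ∀ q : ℤ, e (r, q) = q * (2*m) + (r:ℕ) := fun q => rfl
        simp_rw [this, key (r:ℕ)]
        rw [tsum_mul_left]
        rfl
    _ = _ := by
        rw [Fin.sum_univ_eq_sum_range (fun r : ℕ => Complex.exp (π * I * r^2 / c - π * ε * r^2) *
          jacobiTheta₂ (I * c * r * ε) (I * c^2 * ε))]

lemma master (m : ℕ) (hm : 0 < m) {t : ℝ} (ht : 0 < t) :
    ∑ r ∈ Finset.range (2*m), Complex.exp (π * I * r^2 / (2*m:ℝ)) *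
        jacobiTheta₂ (((r/(2*m:ℝ) : ℝ)) : ℂ) (((0:ℝ):ℂ) + t * I)
      = ((Real.sqrt (2*m:ℝ) : ℝ):ℂ) * Complex.exp (π * I / 4) *
        jacobiTheta₂ (((0:ℝ):ℂ)) (((-1/(2*m:ℝ) : ℝ):ℂ) + t * I) := by
  have hc : (0:ℝ) < (2*m:ℝ) := by positivity
  set ε : ℝ := 1/((2*m:ℝ)^2 * t) with hεdef
  have hε : 0 < ε := by positivity
  have htε : t * ((2*m:ℝ)^2 * ε) = 1 := by
    rw [hεdef]; field_simp
  have hs0 : (0:ℝ) < Real.sqrt ((2*m:ℝ)^2*ε) := Real.sqrt_pos.mpr (by positivity)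
  have hs0' : ((Real.sqrt ((2*m:ℝ)^2*ε) : ℝ):ℂ) ≠ 0 := by exact_mod_cast hs0.ne'
  have h1 : jacobiTheta₂ 0 ((1/(2*m:ℝ) : ℝ) + ε * I) =
      ((Real.sqrt ((2*m:ℝ)^2*ε) : ℝ):ℂ)⁻¹ *
      ∑ r ∈ Finset.range (2*m), Complex.exp (π * I * r^2 / (2*m:ℝ)) *
        jacobiTheta₂ (((r/(2*m:ℝ) : ℝ)) : ℂ) (((0:ℝ):ℂ) + t * I) := by
    rw [theta_split m hm hε, Finset.mul_sum]
    refine Finset.sum_congr rfl fun r _ => ?_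
    rw [theta_FE_inner hc hε r htε]
    calc Complex.exp (π * I * r^2 / (2*m:ℝ) - π * ε * r^2) *
          (((Real.sqrt ((2*m:ℝ)^2*ε) : ℝ):ℂ)⁻¹ * Complex.exp (π * ε * r^2) *
            jacobiTheta₂ (((r/(2*m:ℝ) : ℝ)) : ℂ) (((0:ℝ):ℂ) + t * I))
        = ((Real.sqrt ((2*m:ℝ)^2*ε) : ℝ):ℂ)⁻¹ *
            ((Complex.exp (π * I * r^2 / (2*m:ℝ) - π * ε * r^2) * Complex.exp (π * ε * r^2)) *
              jacobiTheta₂ (((r/(2*m:ℝ) : ℝ)) : ℂ) (((0:ℝ):ℂ) + t * I)) := by ring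
      _ = _ := by
          rw [← Complex.exp_add,
            show (π : ℂ) * I * r^2 / (2*m:ℝ) - π * ε * r^2 + π * ε * r^2
              = π * I * r^2 / (2*m:ℝ) by ring]
  have h2 := theta_outer m hm hε htε
  calc ∑ r ∈ Finset.range (2*m), Complex.exp (π * I * r^2 / (2*m:ℝ)) *
        jacobiTheta₂ (((r/(2*m:ℝ) : ℝ)) : ℂ) (((0:ℝ):ℂ) + t * I)
      = ((Real.sqrt ((2*m:ℝ)^2*ε) : ℝ):ℂ) *
          jacobiTheta₂ 0 ((1/(2*m:ℝ) : ℝ) + ε * I) := by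
        rw [h1, ← mul_assoc, mul_inv_cancel₀ hs0', one_mul]
    _ = _ := by
        rw [h2, ← mul_assoc, scalar_eval hc hε]

lemma gauss_sum (m : ℕ) (hm : 0 < m) :
    ∑ r ∈ Finset.range (2*m), Complex.exp (π * I * r^2 / (2*m:ℝ))
      = ((Real.sqrt (2*m:ℝ) : ℝ):ℂ) * Complex.exp (π * I / 4) := by
  have hL : Filter.Tendsto (fun t : ℝ => ∑ r ∈ Finset.range (2*m),
      Complex.exp (π * I * r^2 / (2*m:ℝ)) *
        jacobiTheta₂ (((r/(2*m:ℝ) : ℝ)) : ℂ) (((0:ℝ):ℂ) + t * I)) Filter.atTop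
      (nhds (∑ r ∈ Finset.range (2*m), Complex.exp (π * I * r^2 / (2*m:ℝ)))) := by
    have : ∀ r ∈ Finset.range (2*m), Filter.Tendsto (fun t : ℝ =>
        Complex.exp (π * I * r^2 / (2*m:ℝ)) *
          jacobiTheta₂ (((r/(2*m:ℝ) : ℝ)) : ℂ) (((0:ℝ):ℂ) + t * I)) Filter.atTop
        (nhds (Complex.exp (π * I * r^2 / (2*m:ℝ)))) := by
      intro r _
      have := (theta_limit (r/(2*m:ℝ)) 0).const_mul (Complex.exp (π * I * r^2 / (2*m:ℝ)))
      simpa using this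
    simpa using Filter.Tendsto.congr (fun t => rfl)
      (tendsto_finset_sum (Finset.range (2*m)) this)
  have hR : Filter.Tendsto (fun t : ℝ =>
      ((Real.sqrt (2*m:ℝ) : ℝ):ℂ) * Complex.exp (π * I / 4) *
        jacobiTheta₂ (((0:ℝ):ℂ)) (((-1/(2*m:ℝ) : ℝ):ℂ) + t * I)) Filter.atTop
      (nhds (((Real.sqrt (2*m:ℝ) : ℝ):ℂ) * Complex.exp (π * I / 4))) := by
    have := (theta_limit 0 (-1/(2*m:ℝ))).const_mul
      (((Real.sqrt (2*m:ℝ) : ℝ):ℂ) * Complex.exp (π * I / 4))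
    simpa using this
  have heq : ∀ᶠ t : ℝ in Filter.atTop, (∑ r ∈ Finset.range (2*m),
      Complex.exp (π * I * r^2 / (2*m:ℝ)) *
        jacobiTheta₂ (((r/(2*m:ℝ) : ℝ)) : ℂ) (((0:ℝ):ℂ) + t * I)) =
      ((Real.sqrt (2*m:ℝ) : ℝ):ℂ) * Complex.exp (π * I / 4) *
        jacobiTheta₂ (((0:ℝ):ℂ)) (((-1/(2*m:ℝ) : ℝ):ℂ) + t * I) := by
    filter_upwards [Filter.eventually_gt_atTop (0:ℝ)] with t ht
    exact master m hm ht
  exact tendsto_nhds_unique (hL.congr' heq) hR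

lemma cos_gauss (m : ℕ) (hm : 0 < m) :
    ∑ r ∈ Finset.range (2*m), Real.cos (π * r^2 / (2*m:ℝ)) = Real.sqrt m := by
  have h := congrArg Complex.re (gauss_sum m hm)
  rw [Complex.re_sum] at h
  have h1 : ∀ r : ℕ, (Complex.exp (π * I * r^2 / (2*m:ℝ))).re
      = Real.cos (π * r^2 / (2*m:ℝ)) := by
    intro r
    rw [show (π:ℂ) * I * r^2 / (2*m:ℝ) = ((π * r^2 / (2*m:ℝ) : ℝ):ℂ) * I by push_cast; ring]
    exact Complex.exp_ofReal_mul_I_re _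
  simp_rw [h1] at h
  rw [h]
  have h2 : (((Real.sqrt (2*m:ℝ) : ℝ):ℂ) * Complex.exp (π * I / 4)).re
      = Real.sqrt (2*m:ℝ) * Real.cos (π/4) := by
    rw [show (π:ℂ) * I / 4 = ((π/4 : ℝ):ℂ) * I by push_cast; ring]
    rw [Complex.re_ofReal_mul, Complex.exp_ofReal_mul_I_re]
  rw [h2, Real.cos_pi_div_four]
  rw [show (2*(m:ℝ)) = 2 * (m:ℝ) by ring, Real.sqrt_mul (by norm_num : (0:ℝ) ≤ 2)]
  rw [div_eq_mul_inv]
  rw [← mul_assoc]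
  have : Real.sqrt 2 * Real.sqrt 2 = 2 := Real.mul_self_sqrt (by norm_num)
  nlinarith [Real.sqrt_nonneg (m:ℝ), Real.sqrt_nonneg (2:ℝ)]

theorem alternating_quadratic_sine_sum_odd (k : ℕ) (hk : 0 < k) :
    ∑ n ∈ Finset.Icc 1 (2 * k - 1), (-1 : ℝ) ^ n *
        Real.sin (π * (n : ℝ) ^ 2 / (2 * (2 * (k : ℝ) - 1))) =
      (-1 : ℝ) ^ k * (1 + Real.sqrt (2 * (k : ℝ) - 1)) / 2 := by
  set m : ℕ := 2 * k - 1 with hmdef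
  have hm : 0 < m := by omega
  have hm2 : 2 * k = m + 1 := by omega
  have hcast : (m : ℝ) = 2 * (k:ℝ) - 1 := by
    have h := congrArg (Nat.cast : ℕ → ℝ) hm2
    push_cast at h
    linarith
  rw [← hcast]
  set f : ℕ → ℝ := fun j => Real.cos (π * (j:ℝ)^2 / (2*(m:ℝ))) with hf
  have hgauss : ∑ r ∈ Finset.range (2*m), f r = Real.sqrt m := cos_gauss m hm
  -- step 1 : termwise identity
  have step1 : ∀ n : ℕ, (-1 : ℝ)^n * Real.sin (π * (n:ℝ)^2 / (2*(m:ℝ)))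
      = (-1:ℝ)^k * f (n + m) := by
    intro n
    have hangle : π * ((n+m : ℕ):ℝ)^2 / (2*(m:ℝ))
        = (π * (n:ℝ)^2 / (2*(m:ℝ)) + (((n:ℤ)+(k:ℤ) : ℤ) : ℝ) * π) - π/2 := by
      have hm0 : (m:ℝ) ≠ 0 := by positivity
      push_cast
      field_simp
      rw [hcast]
      ring
    rw [hf]
    simp only []
    rw [hangle, Real.cos_sub_pi_div_two, Real.sin_add_int_mul_pi]
    have : ((-1:ℝ)) ^ ((n:ℤ)+(k:ℤ)) = (-1:ℝ)^n * (-1:ℝ)^k := by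
      rw [show ((n:ℤ)+(k:ℤ)) = ((n + k : ℕ) : ℤ) by push_cast; ring, zpow_natCast, pow_add]
    rw [this]
    ring_nf
    rw [show ((-1:ℝ))^(k*2) = 1 by rw [mul_comm, pow_mul]; norm_num]
    ring
  -- step 2 : reindex
  have step2 : ∑ n ∈ Finset.Icc 1 m, f (n + m) = ∑ j ∈ Finset.Icc (m+1) (2*m), f j := by
    rw [show (2*m) = m + m by ring, show m+1 = 1+m by ring,
      ← Finset.map_add_right_Icc 1 m m, Finset.sum_map]
    rfl
  -- f symmetry
  have hsymm : ∀ j, m + 1 ≤ j → j ≤ 2*m - 1 → f (2*m - j) = f j := by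
    intro j h1 h2
    have hj2m : j ≤ 2*m := by omega
    have hangle : π * (((2*m - j : ℕ)):ℝ)^2 / (2*(m:ℝ))
        = π * (j:ℝ)^2 / (2*(m:ℝ)) + (((m:ℤ)-(j:ℤ) : ℤ) : ℝ) * (2*π) := by
      have hm0 : (m:ℝ) ≠ 0 := by positivity
      push_cast [Nat.cast_sub hj2m]
      field_simp
      ring
    rw [hf]
    simp only []
    rw [hangle, Real.cos_add_int_mul_two_pi]
  have step3 : ∑ j ∈ Finset.Icc (m+1) (2*m-1), f j = ∑ j ∈ Finset.Icc 1 (m-1), f j := by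
    apply Finset.sum_nbij' (fun j => 2*m - j) (fun j => 2*m - j)
    · intro a ha; simp only [Finset.mem_Icc] at *; omega
    · intro a ha; simp only [Finset.mem_Icc] at *; omega
    · intro a ha; simp only [Finset.mem_Icc] at ha; omega
    · intro a ha; simp only [Finset.mem_Icc] at ha; omega
    · intro a ha
      simp only [Finset.mem_Icc] at ha
      exact (hsymm a ha.1 ha.2).symm
  -- evaluate special values
  have hf0 : f 0 = 1 := by simp [hf]
  have hfm : f m = 0 := by
    rw [hf]
    simp only []
    have : π * (m:ℝ)^2/(2*(m:ℝ)) = (((k:ℤ) : ℤ) : ℝ) * π - π/2 := by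
      have hm0 : (m:ℝ) ≠ 0 := by positivity
      push_cast
      field_simp
      rw [hcast]
    rw [this, Real.cos_sub_pi_div_two]
    simpa using Real.sin_int_mul_pi k
  have hf2m : f (2*m) = 1 := by
    rw [hf]
    simp only []
    have : π * ((2*m:ℕ):ℝ)^2/(2*(m:ℝ)) = 0 + (((m:ℤ) : ℤ) : ℝ) * (2*π) := by
      have hm0 : (m:ℝ) ≠ 0 := by positivity
      push_cast
      field_simp
      ring
    rw [this, Real.cos_add_int_mul_two_pi, Real.cos_zero]
  -- decompose the full Gauss cosine sum
  have hV : ∑ j ∈ Finset.Icc 1 (m-1), f j = (Real.sqrt m - 1)/2 := by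
    have e1 : ∑ j ∈ Finset.Ico 0 1, f j + ∑ j ∈ Finset.Ico 1 (2*m), f j
        = ∑ j ∈ Finset.Ico 0 (2*m), f j :=
      Finset.sum_Ico_consecutive f (by omega) (by omega)
    have e2 : ∑ j ∈ Finset.Ico 1 m, f j + ∑ j ∈ Finset.Ico m (2*m), f j
        = ∑ j ∈ Finset.Ico 1 (2*m), f j :=
      Finset.sum_Ico_consecutive f (by omega) (by omega)
    have e3 : ∑ j ∈ Finset.Ico m (m+1), f j + ∑ j ∈ Finset.Ico (m+1) (2*m), f j
        = ∑ j ∈ Finset.Ico m (2*m), f j :=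
      Finset.sum_Ico_consecutive f (by omega) (by omega)
    have e4 : ∑ j ∈ Finset.Ico 0 1, f j = f 0 := by simp
    have e5 : ∑ j ∈ Finset.Ico m (m+1), f j = f m := by simp
    have e6 : Finset.Ico 1 m = Finset.Icc 1 (m-1) := by
      rw [← Finset.Ico_add_one_right_eq_Icc]; congr 1; omega
    have e7 : Finset.Ico (m+1) (2*m) = Finset.Icc (m+1) (2*m-1) := by
      rw [← Finset.Ico_add_one_right_eq_Icc]; congr 1; omega
    have e8 : ∑ j ∈ Finset.Ico 0 (2*m), f j = Real.sqrt m := by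
      rw [← Finset.range_eq_Ico]; exact hgauss
    rw [e4, hf0, e8] at e1
    rw [e6] at e2
    rw [e5, hfm, e7, step3] at e3
    linarith
  have hU : ∑ j ∈ Finset.Icc (m+1) (2*m), f j = (Real.sqrt m + 1)/2 := by
    have : ∑ j ∈ Finset.Icc (m+1) (2*m), f j
        = ∑ j ∈ Finset.Icc (m+1) (2*m-1), f j + f (2*m) := by
      have h2m : 2*m = (2*m-1) + 1 := by omega
      rw [h2m, Finset.sum_Icc_succ_top (by omega)]
      rw [← h2m]
    rw [this, step3, hV, hf2m]
    ring
  calc ∑ n ∈ Finset.Icc 1 m, (-1:ℝ)^n * Real.sin (π * (n:ℝ)^2 / (2*(m:ℝ)))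
      = ∑ n ∈ Finset.Icc 1 m, (-1:ℝ)^k * f (n + m) := by
        exact Finset.sum_congr rfl fun n _ => step1 n
    _ = (-1:ℝ)^k * ∑ j ∈ Finset.Icc (m+1) (2*m), f j := by
        rw [← Finset.mul_sum, step2]
    _ = (-1:ℝ)^k * ((Real.sqrt m + 1)/2) := by rw [hU]
    _ = (-1:ℝ)^k * (1 + Real.sqrt m)/2 := by ring


end
end

section
/- For every positive integer k, the odd-indexed quadratic Gauss sine sum satisfies ∑_{n=1}^{2k-1} sin(π (2n-1)² / (4(2k-1))) = √(k - 1/2). -/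
open Finset Real

set_option maxHeartbeats 1000000

open Complex Real Filter Topology

namespace GaussAux

lemma re_cpow_half_nonneg (z : ℂ) : 0 ≤ (z ^ (1/2 : ℂ)).re := by
  rcases eq_or_ne z 0 with rfl | hz
  · rw [Complex.zero_cpow (by norm_num)]; simp
  · rw [Complex.cpow_def_of_ne_zero hz, Complex.exp_re]
    have h1 : (Complex.log z * (1/2)).im = z.arg / 2 := by
      simp [Complex.mul_im, Complex.log_im]; ring
    rw [h1]
    have := Complex.neg_pi_lt_arg z
    have := Complex.arg_le_pi z
    have hc : 0 ≤ Real.cos (z.arg / 2) := by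
      apply Real.cos_nonneg_of_mem_Icc
      constructor <;> [linarith [Real.pi_pos]; linarith [Real.pi_pos]]
    positivity

lemma cpow_half_sq {z : ℂ} (hz : z ≠ 0) : z ^ (1/2 : ℂ) * z ^ (1/2 : ℂ) = z := by
  rw [← Complex.cpow_add _ _ hz]; norm_num

lemma cpow_half_eq {z c : ℂ} (hc : c ^ 2 = z) (hre : 0 < c.re) : z ^ (1/2 : ℂ) = c := by
  have hz : z ≠ 0 := by
    rintro rfl
    rw [pow_eq_zero_iff (by norm_num)] at hc
    simp [hc] at hre
  have hs := cpow_half_sq hz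
  have h1 : (z ^ (1/2:ℂ) - c) * (z ^ (1/2:ℂ) + c) = 0 := by
    have h2 : (z ^ (1/2:ℂ) - c) * (z ^ (1/2:ℂ) + c) = z ^ (1/2:ℂ) * z ^ (1/2:ℂ) - c^2 := by
      ring
    rw [h2, hs, hc, sub_self]
  rcases mul_eq_zero.1 h1 with h | h
  · exact sub_eq_zero.1 h
  · exfalso
    have h3 : z ^ (1/2:ℂ) = -c := eq_neg_of_add_eq_zero_left h
    have h4 := re_cpow_half_nonneg z
    rw [h3, Complex.neg_re] at h4
    linarith

lemma cpow_half_quadrant {z : ℂ} (hre : 0 < z.re) (him : z.im < 0) :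
    0 < (z ^ (1/2:ℂ)).re ∧ (z ^ (1/2:ℂ)).im ≤ 0 ∧ -(z ^ (1/2:ℂ)).im < (z ^ (1/2:ℂ)).re := by
  have hz : z ≠ 0 := fun h => by simp [h] at hre
  have harg1 : |z.arg| < π / 2 := Complex.abs_arg_lt_pi_div_two_iff.2 (Or.inl hre)
  have harg2 : z.arg < 0 := Complex.arg_neg_iff.2 him
  have harg3 : -(π/2) < z.arg := (abs_lt.1 harg1).1
  rw [Complex.cpow_def_of_ne_zero hz]
  have h1 : (Complex.log z * (1/2)).im = z.arg / 2 := by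
    simp [Complex.mul_im, Complex.log_im]; ring
  rw [Complex.exp_re, Complex.exp_im, h1]
  set E := Real.exp ((Complex.log z * (1/2)).re) with hE
  have hEpos : 0 < E := Real.exp_pos _
  have hpi := Real.pi_pos
  have hcos : 0 < Real.cos (z.arg / 2) := by
    apply Real.cos_pos_of_mem_Ioo
    exact Set.mem_Ioo.2 ⟨by linarith, by linarith⟩
  have hsin : Real.sin (z.arg / 2) < 0 :=
    Real.sin_neg_of_neg_of_neg_pi_lt (by linarith) (by linarith)
  refine ⟨by positivity, ?_, ?_⟩
  · exact mul_nonpos_of_nonneg_of_nonpos hEpos.le hsin.le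
  · rw [← mul_neg]
    apply mul_lt_mul_of_pos_left _ hEpos
    have e1 : -Real.sin (z.arg / 2) = Real.sin (-(z.arg/2)) := by
      rw [Real.sin_neg]
    have e2 : Real.sin (-(z.arg/2)) < Real.sin (π/4) := by
      apply Real.strictMonoOn_sin (Set.mem_Icc.2 ⟨by linarith, by linarith⟩)
        (Set.mem_Icc.2 ⟨by linarith, by linarith⟩) (by linarith)
    have e3 : Real.cos (π/4) < Real.cos (z.arg / 2) := by
      rw [← Real.cos_abs (z.arg / 2)]
      apply Real.cos_lt_cos_of_nonneg_of_le_pi (abs_nonneg _) (by linarith)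
      rw [abs_div, abs_of_pos (by norm_num : (0:ℝ) < 2)]
      linarith [abs_lt.1 harg1]
    rw [e1]
    calc Real.sin (-(z.arg/2)) < Real.sin (π/4) := e2
      _ = Real.cos (π/4) := by rw [Real.sin_pi_div_four, Real.cos_pi_div_four]
      _ < Real.cos (z.arg / 2) := e3

lemma cpow_half_mul {z₁ z₂ : ℂ} (h1re : 0 < z₁.re) (h1im : z₁.im < 0)
    (h2re : 0 < z₂.re) (h2im : z₂.im < 0) {c : ℂ} (hc : c ^ 2 = z₁ * z₂) (hcre : 0 < c.re) :
    z₁ ^ (1/2:ℂ) * z₂ ^ (1/2:ℂ) = c := by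
  have hz1 : z₁ ≠ 0 := fun h => by simp [h] at h1re
  have hz2 : z₂ ≠ 0 := fun h => by simp [h] at h2re
  obtain ⟨a1, b1, c1⟩ := cpow_half_quadrant h1re h1im
  obtain ⟨a2, b2, c2⟩ := cpow_half_quadrant h2re h2im
  set s₁ := z₁ ^ (1/2:ℂ)
  set s₂ := z₂ ^ (1/2:ℂ)
  have hP : (s₁ * s₂) * (s₁ * s₂) = c ^ 2 := by
    have e1 := cpow_half_sq hz1
    have e2 := cpow_half_sq hz2
    calc (s₁ * s₂) * (s₁ * s₂) = (s₁ * s₁) * (s₂ * s₂) := by ring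
      _ = z₁ * z₂ := by rw [e1, e2]
      _ = c ^ 2 := hc.symm
  have hPre : 0 < (s₁ * s₂).re := by
    rw [Complex.mul_re]
    nlinarith
  have h1 : (s₁ * s₂ - c) * (s₁ * s₂ + c) = 0 := by
    have h2 : (s₁ * s₂ - c) * (s₁ * s₂ + c) = (s₁ * s₂) * (s₁ * s₂) - c^2 := by ring
    rw [h2, hP, sub_self]
  rcases mul_eq_zero.1 h1 with h | h
  · exact sub_eq_zero.1 h
  · exfalso
    have h3 : s₁ * s₂ = -c := eq_neg_of_add_eq_zero_left h
    rw [h3, Complex.neg_re] at hPre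
    linarith

lemma theta_tendsto_one (x c : ℝ) :
    Tendsto (fun y : ℝ => jacobiTheta₂ (x:ℂ) ((c:ℂ) + Complex.I * y)) atTop (𝓝 1) := by
  have key : Tendsto (fun y : ℝ => ∑' n : ℤ, jacobiTheta₂_term n (x:ℂ) ((c:ℂ) + Complex.I * y))
      atTop (𝓝 (∑' n : ℤ, if n = 0 then (1:ℂ) else 0)) := by
    apply tendsto_tsum_of_dominated_convergence (bound := fun n : ℤ => rexp (-π * n^2))
    · have h := summable_pow_mul_jacobiTheta₂_term_bound 0 one_pos 0
      simpa using h
    · intro n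
      rcases eq_or_ne n 0 with rfl | hn
      · simp only [jacobiTheta₂_term]
        norm_num
      · simp only [if_neg hn]
        rw [tendsto_zero_iff_norm_tendsto_zero]
        have hnorm : ∀ y : ℝ, ‖jacobiTheta₂_term n (x:ℂ) ((c:ℂ) + Complex.I * y)‖
            = rexp (-π * n^2 * y) := by
          intro y
          rw [norm_jacobiTheta₂_term]
          norm_num [Complex.add_im, Complex.mul_im]
        simp only [hnorm]
        have hn2 : (0:ℝ) < (n:ℝ)^2 := by
          have : (n:ℝ) ≠ 0 := Int.cast_ne_zero.2 hn
          positivity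
        have h1 : Tendsto (fun y : ℝ => -π * n^2 * y) atTop atBot :=
          Tendsto.const_mul_atTop_of_neg (by nlinarith [Real.pi_pos]) tendsto_id
        exact Real.tendsto_exp_atBot.comp h1
    · filter_upwards [eventually_ge_atTop (1:ℝ)] with y hy n
      rw [norm_jacobiTheta₂_term]
      apply Real.exp_le_exp.2
      have him : ((c:ℂ) + Complex.I * y).im = y := by
        simp [Complex.add_im, Complex.mul_im]
      have hxim : (x:ℂ).im = 0 := by simp
      rw [him, hxim]
      have h2 : (0:ℝ) ≤ (n:ℝ)^2 := by positivity
      nlinarith [mul_nonneg (mul_nonneg Real.pi_pos.le h2) (sub_nonneg.2 hy)]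
  have : (∑' n : ℤ, if n = 0 then (1:ℂ) else 0) = 1 := tsum_ite_eq 0 1
  rw [this] at key
  exact key

lemma half_shift (m : ℕ) (hm : Odd m) (σ : ℂ) :
    jacobiTheta₂ (1/2) σ = jacobiTheta₂ 0 (σ + m) := by
  unfold jacobiTheta₂
  apply tsum_congr
  intro n
  unfold jacobiTheta₂_term
  obtain ⟨j, hj⟩ : ∃ j : ℤ, n^2 * m - n = 2 * j := by
    rcases Int.even_or_odd n with he | ho
    · obtain ⟨c, hc⟩ := he
      exact ⟨c * n * m - c, by rw [hc]; ring⟩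
    · obtain ⟨c, hc⟩ := ho
      obtain ⟨d, hd⟩ := hm
      have : n^2 * m - n = n * (n * m - 1) := by ring
      rw [this, hc, hd]
      exact ⟨(2*c+1) * (c * (2*d+1) + d), by push_cast; ring⟩
  have key : 2 * ↑π * Complex.I * n * 0 + ↑π * Complex.I * n^2 * (σ + m)
      = (2 * ↑π * Complex.I * n * (1/2) + ↑π * Complex.I * n^2 * σ) + j * (2 * π * Complex.I) := by
    have : ((n:ℂ)^2 * m - n) = 2 * j := by
      have := congrArg (Int.cast : ℤ → ℂ) hj
      push_cast at this
      exact_mod_cast hj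
    linear_combination (↑π * Complex.I) * this
  rw [key, Complex.exp_add (2 * ↑π * Complex.I * n * (1/2) + ↑π * Complex.I * n^2 * σ)
    (j * (2*π*Complex.I)), Complex.exp_int_mul_two_pi_mul_I, mul_one]

lemma lemA (m : ℕ) (hm : Odd m) (t : ℝ) (ht : 0 < t) :
    ((m:ℂ) * (Real.sqrt t : ℝ)) *
      (∑' n : ℤ, cexp (π * Complex.I * (2*n+1)^2 * ((m:ℂ)⁻¹ + Complex.I*t) / 4))
    = ∑ r ∈ Finset.range m, cexp (π * Complex.I * (2*(r:ℂ)+1)^2 / (4*m)) *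
        jacobiTheta₂ ((2*(r:ℂ)+1)/(2*m)) (Complex.I / (m^2*t)) := by
  have hmpos : 0 < m := hm.pos
  haveI : NeZero m := ⟨hmpos.ne'⟩
  have hm0 : (m:ℂ) ≠ 0 := Nat.cast_ne_zero.2 hmpos.ne'
  have hmR0 : (m:ℝ) ≠ 0 := Nat.cast_ne_zero.2 hmpos.ne'
  have ht0 : (t:ℂ) ≠ 0 := Complex.ofReal_ne_zero.2 ht.ne'
  set τ : ℂ := (m:ℂ)⁻¹ + Complex.I*t with hτdef
  have himτ : τ.im = t := by
    simp [hτdef, Complex.add_im, Complex.mul_im]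
  have hτim : 0 < τ.im := by rw [himτ]; exact ht
  set g : ℤ → ℂ := fun n => cexp (π * Complex.I * (2*n+1)^2 * τ / 4) with hgdef
  have hterm : ∀ n : ℤ, g n = cexp (π*Complex.I*τ/4) * jacobiTheta₂_term n (τ/2) τ := by
    intro n
    rw [hgdef]
    simp only [jacobiTheta₂_term]
    rw [← Complex.exp_add]
    congr 1
    ring
  have hsum : Summable g := by
    rw [funext hterm]
    exact ((summable_jacobiTheta₂_term_iff (τ/2) τ).2 hτim).mul_left _
  -- split the sum by residues mod m
  set e : Fin m × ℤ ≃ ℤ :=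
    (Equiv.prodComm (Fin m) ℤ).trans (Int.divModEquiv m).symm with hedef
  have he : ∀ (r : Fin m) (j : ℤ), e (r, j) = j * m + (r:ℤ) := fun r j => rfl
  have hsplit : (∑' n : ℤ, g n) = ∑ r : Fin m, ∑' j : ℤ, g (j * m + (r:ℤ)) := by
    rw [← e.tsum_eq g]
    have hsum' : Summable (fun p : Fin m × ℤ => g (e p)) := e.summable_iff.2 hsum
    rw [Summable.tsum_prod hsum', tsum_fintype]
    exact Finset.sum_congr rfl (fun r _ => tsum_congr (fun j => by rw [he]))
  -- inner sums
  have hinner : ∀ r : Fin m, ∑' j : ℤ, g (j * m + (r:ℤ))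
      = cexp (π*Complex.I*(2*(r:ℂ)+1)^2*τ/4) *
        jacobiTheta₂ ((2*(r:ℂ)+1)*m*Complex.I*t/2) ((m:ℂ)^2*Complex.I*t) := by
    intro r
    rw [jacobiTheta₂, ← tsum_mul_left]
    apply tsum_congr
    intro j
    simp only [jacobiTheta₂_term, hgdef]
    rw [← Complex.exp_add]
    obtain ⟨c, hc⟩ : ∃ c : ℤ, (2*(r:ℤ)+1)*j + m*j^2 = 2*c := by
      rcases Int.even_or_odd j with he' | ho
      · obtain ⟨d, hd⟩ := he'
        exact ⟨(2*(r:ℤ)+1)*d + m*2*d^2, by rw [hd]; ring⟩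
      · obtain ⟨d, hd⟩ := ho
        obtain ⟨u, hu⟩ := hm
        refine ⟨(2*(r:ℤ)+1)*d + (r:ℤ) + u + (2*u+1)*(2*d^2+2*d) + 1, ?_⟩
        have hm' : (m:ℤ) = 2*u+1 := by exact_mod_cast hu
        subst hd; rw [hm']; push_cast; ring
    have hcC : (2*(r:ℂ)+1)*(j:ℂ) + (m:ℂ)*(j:ℂ)^2 = 2*(c:ℂ) := by
      have := congrArg (Int.cast : ℤ → ℂ) hc
      push_cast at this
      exact_mod_cast hc
    have hmm : (m:ℂ) * (m:ℂ)⁻¹ = 1 := mul_inv_cancel₀ hm0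
    have key : π * Complex.I * (2*((j:ℂ)*m+(r:ℂ))+1)^2 * τ / 4
        = (π*Complex.I*(2*(r:ℂ)+1)^2*τ/4
            + (2 * ↑π * Complex.I * j * ((2*(r:ℂ)+1)*m*Complex.I*t/2)
               + ↑π * Complex.I * j^2 * ((m:ℂ)^2*Complex.I*t)))
          + c * (2 * π * Complex.I) := by
      rw [hτdef]
      linear_combination (π * Complex.I * (j:ℂ) * ((2*(r:ℂ)+1) + (m:ℂ)*(j:ℂ))) * hmm
        + (π * Complex.I) * hcC
    push_cast
    rw [key, Complex.exp_add, Complex.exp_int_mul_two_pi_mul_I, mul_one, Complex.exp_add]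
  -- apply the functional equation to each inner theta
  have hI0 : Complex.I ≠ 0 := Complex.I_ne_zero
  have hmt0 : ((m:ℝ) * Real.sqrt t : ℝ) ≠ 0 := by
    have := Real.sqrt_pos.2 ht
    positivity
  have hfe : ∀ r : Fin m,
      ((m:ℂ) * (Real.sqrt t : ℝ)) * (cexp (π*Complex.I*(2*(r:ℂ)+1)^2*τ/4) *
        jacobiTheta₂ ((2*(r:ℂ)+1)*m*Complex.I*t/2) ((m:ℂ)^2*Complex.I*t))
      = cexp (π * Complex.I * (2*(r:ℂ)+1)^2 / (4*m)) *
        jacobiTheta₂ ((2*(r:ℂ)+1)/(2*m)) (Complex.I / (m^2*t)) := by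
    intro r
    set a : ℂ := 2*(r:ℂ)+1 with hadef
    rw [jacobiTheta₂_functional_equation (a*m*Complex.I*t/2) ((m:ℂ)^2*Complex.I*t)]
    have hmRpos : 0 < (m:ℝ) := by exact_mod_cast hmpos
    have e1 : ((m:ℝ) * Real.sqrt t)^2 = (m:ℝ)^2 * t := by
      rw [mul_pow, Real.sq_sqrt ht.le]
    have h1 : -Complex.I * ((m:ℂ)^2*Complex.I*t) = ((((m:ℝ) * Real.sqrt t : ℝ) : ℂ))^2 := by
      rw [← Complex.ofReal_pow, e1,
        show -Complex.I * ((m:ℂ)^2*Complex.I*t) = -(Complex.I*Complex.I) * ((m:ℂ)^2*t) by ring,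
        Complex.I_mul_I]
      push_cast
      ring
    have h1' : (-Complex.I * ((m:ℂ)^2*Complex.I*t)) ^ (1/2:ℂ)
        = (((m:ℝ) * Real.sqrt t : ℝ) : ℂ) := by
      rw [h1]
      apply cpow_half_eq rfl
      rw [Complex.ofReal_re]
      positivity
    have hden : ((m:ℂ)^2*Complex.I*t) ≠ 0 := by
      simp [hm0, ht0, hI0]
    have h3 : (a*m*Complex.I*t/2)/((m:ℂ)^2*Complex.I*t) = a/(2*m) := by
      rw [div_eq_div_iff hden (by simp [hm0] : (2*(m:ℂ)) ≠ 0)]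
      ring
    have h4 : -1/((m:ℂ)^2*Complex.I*t) = Complex.I/((m:ℂ)^2*t) := by
      rw [div_eq_div_iff hden (by simp [hm0, ht0] : ((m:ℂ)^2*(t:ℂ)) ≠ 0),
        show Complex.I * ((m:ℂ)^2*Complex.I*t) = (Complex.I*Complex.I) * ((m:ℂ)^2*t) by ring,
        Complex.I_mul_I]
    have hx : -↑π*Complex.I*(a*m*Complex.I*t/2)^2/((m:ℂ)^2*Complex.I*t) = ↑π*a^2*t/4 := by
      rw [div_eq_iff hden]
      linear_combination (-(↑π*a^2*(m:ℂ)^2*(t:ℂ)^2*Complex.I/4)) * Complex.I_sq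
    have h2 : cexp (π*Complex.I*a^2*τ/4) * cexp (-↑π*Complex.I*(a*m*Complex.I*t/2)^2/((m:ℂ)^2*Complex.I*t))
        = cexp (π * Complex.I * a^2 / (4*m)) := by
      rw [hx, ← Complex.exp_add]
      congr 1
      rw [hτdef]
      linear_combination ((↑π*a^2*(t:ℂ)/4) : ℂ) * Complex.I_sq
    rw [h1', h3, h4]
    calc ((m:ℂ) * (Real.sqrt t : ℝ)) * (cexp (π*Complex.I*a^2*τ/4) *
          (1 / (((m:ℝ) * Real.sqrt t : ℝ) : ℂ) *
            cexp (-↑π*Complex.I*(a*m*Complex.I*t/2)^2/((m:ℂ)^2*Complex.I*t)) *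
            jacobiTheta₂ (a/(2*m)) (Complex.I/((m:ℂ)^2*t))))
        = (((m:ℂ) * (Real.sqrt t : ℝ)) * (1 / (((m:ℝ) * Real.sqrt t : ℝ) : ℂ))) *
          ((cexp (π*Complex.I*a^2*τ/4) *
            cexp (-↑π*Complex.I*(a*m*Complex.I*t/2)^2/((m:ℂ)^2*Complex.I*t))) *
            jacobiTheta₂ (a/(2*m)) (Complex.I/((m:ℂ)^2*t))) := by ring
      _ = _ := by
          rw [h2]
          have : ((m:ℂ) * (Real.sqrt t : ℝ)) * (1 / (((m:ℝ) * Real.sqrt t : ℝ) : ℂ)) = 1 := by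
            rw [mul_one_div]
            rw [div_eq_one_iff_eq (by exact_mod_cast hmt0)]
            push_cast
            ring
          rw [this, one_mul]
  -- assemble
  rw [hsplit, Finset.mul_sum]
  rw [show ∑ r : Fin m, ((m:ℂ) * (Real.sqrt t : ℝ)) * ∑' j : ℤ, g (j * m + (r:ℤ))
      = ∑ r : Fin m, cexp (π * Complex.I * (2*(r:ℂ)+1)^2 / (4*m)) *
        jacobiTheta₂ ((2*(r:ℂ)+1)/(2*m)) (Complex.I / (m^2*t)) from
    Finset.sum_congr rfl (fun r _ => by rw [hinner r, hfe r])]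
  rw [Fin.sum_univ_eq_sum_range (fun r => cexp (π * Complex.I * (2*(r:ℂ)+1)^2 / (4*m)) *
        jacobiTheta₂ ((2*(r:ℂ)+1)/(2*m)) (Complex.I / (m^2*t))) m]

lemma lemB (m : ℕ) (hm : Odd m) (t : ℝ) (ht : 0 < t) :
    (∑' n : ℤ, cexp (π * Complex.I * (2*n+1)^2 * ((m:ℂ)⁻¹ + Complex.I*t) / 4))
    = 1/(-Complex.I * ((m:ℂ)⁻¹ + Complex.I*t))^(1/2:ℂ)
      * (1/(-Complex.I * (-1/((m:ℂ)⁻¹ + Complex.I*t) + m))^(1/2:ℂ)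
      * jacobiTheta₂ 0 (-1/(-1/((m:ℂ)⁻¹ + Complex.I*t) + m))) := by
  have hmpos : 0 < m := hm.pos
  have hm0 : (m:ℂ) ≠ 0 := Nat.cast_ne_zero.2 hmpos.ne'
  set τ : ℂ := (m:ℂ)⁻¹ + Complex.I*t with hτdef
  have himτ : τ.im = t := by
    simp [hτdef, Complex.add_im, Complex.mul_im]
  have hτim : 0 < τ.im := by rw [himτ]; exact ht
  have hτ0 : τ ≠ 0 := fun h => by rw [h] at himτ; simp at himτ; exact ht.ne himτ
  have step1 : (∑' n : ℤ, cexp (π * Complex.I * (2*n+1)^2 * τ / 4))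
      = cexp (π*Complex.I*τ/4) * jacobiTheta₂ (τ/2) τ := by
    rw [jacobiTheta₂, ← tsum_mul_left]
    apply tsum_congr
    intro n
    simp only [jacobiTheta₂_term]
    rw [← Complex.exp_add]
    congr 1
    ring
  rw [step1, jacobiTheta₂_functional_equation (τ/2) τ]
  have h1 : (τ/2)/τ = 1/2 := by
    field_simp
  have h2 : cexp (π*Complex.I*τ/4) * cexp (-↑π*Complex.I*(τ/2)^2/τ) = 1 := by
    rw [← Complex.exp_add, ← Complex.exp_zero]
    congr 1
    have : -↑π*Complex.I*(τ/2)^2/τ = -(π*Complex.I*τ/4) := by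
      rw [div_eq_iff hτ0]
      ring
    rw [this]
    ring
  rw [h1, half_shift m hm (-1/τ), jacobiTheta₂_functional_equation 0 (-1/τ + m)]
  have h3 : (0:ℂ)/(-1/τ + m) = 0 := zero_div _
  have h4 : cexp (-↑π*Complex.I*(0:ℂ)^2/(-1/τ + m)) = 1 := by
    norm_num
  rw [h3, h4]
  calc cexp (↑π * Complex.I * τ / 4) *
      (1 / (-Complex.I * τ) ^ (1/2:ℂ) * cexp (-↑π * Complex.I * (τ / 2) ^ 2 / τ) *
        (1 / (-Complex.I * (-1 / τ + ↑m)) ^ (1/2:ℂ) * 1 *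
          jacobiTheta₂ 0 (-1 / (-1 / τ + ↑m))))
      = (cexp (↑π * Complex.I * τ / 4) * cexp (-↑π * Complex.I * (τ / 2) ^ 2 / τ)) *
        (1 / (-Complex.I * τ) ^ (1/2:ℂ) *
          (1 / (-Complex.I * (-1 / τ + ↑m)) ^ (1/2:ℂ) *
            jacobiTheta₂ 0 (-1 / (-1 / τ + ↑m)))) := by ring
    _ = _ := by rw [h2, one_mul]

lemma lemC (m : ℕ) (hmpos : 0 < m) (t : ℝ) (ht : 0 < t) :
    ((m:ℂ) * (Real.sqrt t : ℝ)) *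
      (1/(-Complex.I * ((m:ℂ)⁻¹ + Complex.I*t))^(1/2:ℂ)
       * (1/(-Complex.I * (-1/((m:ℂ)⁻¹ + Complex.I*t) + m))^(1/2:ℂ)))
    = ((Real.sqrt m : ℝ) : ℂ) * (1+Complex.I) / ((Real.sqrt 2 : ℝ) : ℂ) := by
  have hm0 : (m:ℂ) ≠ 0 := Nat.cast_ne_zero.2 hmpos.ne'
  have hmRpos : 0 < (m:ℝ) := by exact_mod_cast hmpos
  set τ : ℂ := (m:ℂ)⁻¹ + Complex.I*t with hτdef
  have hminv : ((m:ℂ))⁻¹ = ((((m:ℝ))⁻¹ : ℝ) : ℂ) := by push_cast; ring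
  have hτreal : τ = ((((m:ℝ))⁻¹ : ℝ) : ℂ) + Complex.I*(t:ℝ) := by rw [hτdef, hminv]
  have himτ : τ.im = t := by
    simp [hτdef, Complex.add_im, Complex.mul_im]
  have hτ0 : τ ≠ 0 := fun h => by rw [h] at himτ; simp at himτ; exact ht.ne himτ
  have hreτ : τ.re = ((m:ℝ))⁻¹ := by
    rw [hτreal]; simp
  -- z₁ facts
  have hz1 : -Complex.I * τ = ((t:ℝ):ℂ) - Complex.I*((((m:ℝ))⁻¹ : ℝ):ℂ) := by
    rw [hτreal]
    linear_combination (-(t:ℂ)) * Complex.I_sq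
  have hz1re : (-Complex.I * τ).re = t := by rw [hz1]; simp
  have hz1im : (-Complex.I * τ).im = -((m:ℝ))⁻¹ := by rw [hz1]; simp
  -- z₂ facts
  have h5 : (-1/τ + (m:ℂ)) * τ = (m:ℂ)*Complex.I*t := by
    rw [add_mul, neg_div, neg_mul, div_mul_cancel₀ _ hτ0, hτdef, mul_add,
      mul_inv_cancel₀ hm0]
    ring
  have hz2 : -Complex.I * (-1/τ + m) = (((m:ℝ)*t : ℝ):ℂ)/τ := by
    rw [eq_div_iff hτ0]
    push_cast
    linear_combination (-Complex.I)*h5 + (-(m:ℂ)*(t:ℂ))*Complex.I_sq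
  have hN : 0 < Complex.normSq τ := Complex.normSq_pos.2 hτ0
  have hz2re : (-Complex.I * (-1/τ + m)).re = (m:ℝ)*t*((m:ℝ))⁻¹/Complex.normSq τ := by
    rw [hz2, Complex.div_re, hreτ]
    simp [himτ]
  have hz2im : (-Complex.I * (-1/τ + m)).im = -((m:ℝ)*t*t)/Complex.normSq τ := by
    rw [hz2, Complex.div_im, hreτ, himτ]
    simp
    ring
  -- candidate square root of the product
  have hmt0 : (0:ℝ) ≤ (m:ℝ)*t/2 := by positivity
  set c : ℂ := ((Real.sqrt ((m:ℝ)*t/2) : ℝ) : ℂ) * (1 - Complex.I) with hcdef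
  have hc2 : c^2 = (-Complex.I * τ) * (-Complex.I * (-1/τ + m)) := by
    have hprod : (-Complex.I * τ) * (-Complex.I * (-1/τ + m)) = -Complex.I * (((m:ℝ)*t : ℝ):ℂ) := by
      rw [hz2]
      field_simp
    rw [hprod, hcdef]
    have e1 : (Real.sqrt ((m:ℝ)*t/2))^2 = (m:ℝ)*t/2 := Real.sq_sqrt hmt0
    calc (((Real.sqrt ((m:ℝ)*t/2) : ℝ) : ℂ) * (1 - Complex.I))^2
        = (((Real.sqrt ((m:ℝ)*t/2))^2 : ℝ) : ℂ) * (1 - Complex.I)^2 := by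
          push_cast; ring
      _ = (((m:ℝ)*t/2 : ℝ) : ℂ) * (1 - Complex.I)^2 := by rw [e1]
      _ = -Complex.I * (((m:ℝ)*t : ℝ):ℂ) := by
          push_cast
          linear_combination ((m:ℂ)*(t:ℂ)/2) * Complex.I_sq
  have hcre : 0 < c.re := by
    have hre : c.re = Real.sqrt ((m:ℝ)*t/2) := by
      rw [hcdef]
      simp [Complex.mul_re]
    rw [hre]
    exact Real.sqrt_pos.2 (by positivity)
  have hmul := cpow_half_mul (z₁ := -Complex.I * τ) (z₂ := -Complex.I * (-1/τ + m))
    (by rw [hz1re]; exact ht) (by rw [hz1im]; simp [hmRpos])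
    (by rw [hz2re]; positivity)
    (by rw [hz2im]
        apply div_neg_of_neg_of_pos _ hN
        have : 0 < (m:ℝ)*t*t := by positivity
        linarith)
    hc2 hcre
  have hc0 : c ≠ 0 := fun h => by rw [h] at hcre; simp at hcre
  have h2C : ((Real.sqrt 2 : ℝ) : ℂ) ≠ 0 := by
    simp only [ne_eq, Complex.ofReal_eq_zero]
    positivity
  rw [show ((m:ℂ) * ((Real.sqrt t : ℝ):ℂ)) *
      (1/(-Complex.I * τ)^(1/2:ℂ) * (1/(-Complex.I * (-1/τ + m))^(1/2:ℂ)))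
      = ((m:ℂ) * ((Real.sqrt t : ℝ):ℂ)) /
        ((-Complex.I * τ)^(1/2:ℂ) * (-Complex.I * (-1/τ + m))^(1/2:ℂ)) from by ring,
    hmul, div_eq_div_iff hc0 h2C]
  have hA : ((Real.sqrt 2 : ℝ):ℂ) * ((Real.sqrt ((m:ℝ)*t/2) : ℝ):ℂ)
      = ((Real.sqrt m : ℝ):ℂ) * ((Real.sqrt t : ℝ):ℂ) := by
    have : Real.sqrt 2 * Real.sqrt ((m:ℝ)*t/2) = Real.sqrt (m:ℝ) * Real.sqrt t := by
      rw [← Real.sqrt_mul (by norm_num : (0:ℝ) ≤ 2), show 2*((m:ℝ)*t/2) = (m:ℝ)*t by ring,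
        Real.sqrt_mul hmRpos.le]
    exact_mod_cast congrArg (fun x : ℝ => (x:ℂ)) this
  have hB : ((Real.sqrt m : ℝ):ℂ) * ((Real.sqrt m : ℝ):ℂ) = ((m:ℕ):ℂ) := by
    exact_mod_cast congrArg (fun x : ℝ => (x:ℂ)) (Real.mul_self_sqrt hmRpos.le)
  have hC : ((Real.sqrt 2 : ℝ):ℂ) * ((Real.sqrt 2 : ℝ):ℂ) = 2 := by
    exact_mod_cast congrArg (fun x : ℝ => (x:ℂ)) (Real.mul_self_sqrt (by norm_num : (0:ℝ) ≤ 2))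
  refine mul_right_cancel₀ h2C ?_
  rw [hcdef]
  push_cast
  linear_combination ((m:ℂ)*((Real.sqrt t:ℝ):ℂ))*hC + (-2*((Real.sqrt m:ℝ):ℂ))*hA
    + (-2*((Real.sqrt t:ℝ):ℂ))*hB
    + (((Real.sqrt m:ℝ):ℂ)*((Real.sqrt 2:ℝ):ℂ)*((Real.sqrt ((m:ℝ)*t/2):ℝ):ℂ))*Complex.I_sq

lemma master (m : ℕ) (hm : Odd m) (t : ℝ) (ht : 0 < t) :
    ∑ r ∈ Finset.range m, cexp (π * Complex.I * (2*(r:ℂ)+1)^2 / (4*m)) *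
        jacobiTheta₂ ((2*(r:ℂ)+1)/(2*m)) (Complex.I / (m^2*t))
    = ((Real.sqrt m : ℝ):ℂ) * (1+Complex.I) / ((Real.sqrt 2 : ℝ):ℂ)
      * jacobiTheta₂ 0 (-1/(-1/((m:ℂ)⁻¹ + Complex.I*t) + m)) := by
  rw [← lemA m hm t ht, lemB m hm t ht, ← lemC m hm.pos t ht]
  ring

lemma second_arg_eq (m : ℕ) (hmpos : 0 < m) (t : ℝ) (ht : 0 < t) :
    -1/(-1/((m:ℂ)⁻¹ + Complex.I*t) + m)
    = ((-1/(m:ℝ) : ℝ):ℂ) + Complex.I * ((1/((m:ℝ)^2*t) : ℝ):ℂ) := by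
  have hm0 : (m:ℂ) ≠ 0 := Nat.cast_ne_zero.2 hmpos.ne'
  have hmR0 : (m:ℝ) ≠ 0 := Nat.cast_ne_zero.2 hmpos.ne'
  have ht0 : (t:ℂ) ≠ 0 := Complex.ofReal_ne_zero.2 ht.ne'
  set τ : ℂ := (m:ℂ)⁻¹ + Complex.I*t with hτdef
  have himτ : τ.im = t := by simp [hτdef, Complex.add_im, Complex.mul_im]
  have hτ0 : τ ≠ 0 := fun h => by rw [h] at himτ; simp at himτ; exact ht.ne himτ
  have h5 : (-1/τ + (m:ℂ)) * τ = (m:ℂ)*Complex.I*t := by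
    rw [add_mul, neg_div, neg_mul, div_mul_cancel₀ _ hτ0, hτdef, mul_add,
      mul_inv_cancel₀ hm0]
    ring
  have hw0 : (-1/τ + (m:ℂ)) ≠ 0 := by
    intro h
    rw [h, zero_mul] at h5
    exact (by simp [hm0, ht0, Complex.I_ne_zero] : (m:ℂ)*Complex.I*(t:ℂ) ≠ 0) h5.symm
  rw [div_eq_iff hw0]
  set N : ℂ := ((-1/(m:ℝ) : ℝ):ℂ) + Complex.I * ((1/((m:ℝ)^2*t) : ℝ):ℂ) with hNdef
  have key : N * ((m:ℂ)*Complex.I*t) = -τ := by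
    rw [hNdef, hτdef]
    push_cast
    field_simp
    linear_combination Complex.I_sq
  have h6 : (N * (-1/τ + (m:ℂ)) + 1) * τ = 0 := by
    linear_combination N * h5 + key
  have h7 := (mul_eq_zero.1 h6).resolve_right hτ0
  linear_combination (-1 : ℂ) * h7

lemma gauss (m : ℕ) (hm : Odd m) :
    ∑ r ∈ Finset.range m, cexp (π * Complex.I * (2*(r:ℂ)+1)^2 / (4*(m:ℂ)))
    = ((Real.sqrt m : ℝ):ℂ) * (1+Complex.I) / ((Real.sqrt 2 : ℝ):ℂ) := by
  have hmpos := hm.pos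
  have hmR0 : ((m:ℝ)) ≠ 0 := Nat.cast_ne_zero.2 hmpos.ne'
  have hm0 : (m:ℂ) ≠ 0 := Nat.cast_ne_zero.2 hmpos.ne'
  have hy : Tendsto (fun t : ℝ => 1/((m:ℝ)^2*t)) (𝓝[>] (0:ℝ)) atTop := by
    have h1 : Tendsto (fun t : ℝ => (m:ℝ)^2*t) (𝓝[>] (0:ℝ)) (𝓝[>] (0:ℝ)) := by
      apply tendsto_nhdsWithin_of_tendsto_nhds_of_eventually_within
      · have h2 : Tendsto (fun t : ℝ => (m:ℝ)^2*t) (𝓝 (0:ℝ)) (𝓝 (0:ℝ)) := by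
          exact (continuous_mul_left ((m:ℝ)^2)).tendsto' 0 0 (by simp)
        exact h2.mono_left nhdsWithin_le_nhds
      · filter_upwards [self_mem_nhdsWithin] with t ht
        exact Set.mem_Ioi.2 (mul_pos (by positivity) ht)
    simpa only [Function.comp_def, one_div] using tendsto_inv_nhdsGT_zero.comp h1
  have hLHS : Tendsto (fun t : ℝ => ∑ r ∈ Finset.range m,
      cexp (π * Complex.I * (2*(r:ℂ)+1)^2 / (4*(m:ℂ))) *
        jacobiTheta₂ ((2*(r:ℂ)+1)/(2*(m:ℂ))) (Complex.I / ((m:ℂ)^2*t))) (𝓝[>] (0:ℝ))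
      (𝓝 (∑ r ∈ Finset.range m, cexp (π * Complex.I * (2*(r:ℂ)+1)^2 / (4*(m:ℂ))) * 1)) := by
    apply tendsto_finset_sum
    intro r _
    apply Tendsto.const_mul
    have hx := (theta_tendsto_one ((2*(r:ℝ)+1)/(2*(m:ℝ))) 0).comp hy
    apply hx.congr'
    filter_upwards [self_mem_nhdsWithin] with t ht
    have ht0 : (t:ℂ) ≠ 0 := Complex.ofReal_ne_zero.2 (ne_of_gt ht)
    have e1 : ((((2*(r:ℝ)+1)/(2*(m:ℝ)) : ℝ)):ℂ) = (2*(r:ℂ)+1)/(2*(m:ℂ)) := by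
      push_cast
      ring
    have e2 : (((0:ℝ)):ℂ) + Complex.I * (((1/((m:ℝ)^2*t) : ℝ)):ℂ)
        = Complex.I / ((m:ℂ)^2*t) := by
      push_cast
      ring
    simp only [Function.comp]
    rw [e1, e2]
  have hRHS : Tendsto (fun t : ℝ => ((Real.sqrt m : ℝ):ℂ) * (1+Complex.I) / ((Real.sqrt 2 : ℝ):ℂ)
      * jacobiTheta₂ 0 (-1/(-1/((m:ℂ)⁻¹ + Complex.I*t) + m))) (𝓝[>] (0:ℝ))
      (𝓝 (((Real.sqrt m : ℝ):ℂ) * (1+Complex.I) / ((Real.sqrt 2 : ℝ):ℂ) * 1)) := by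
    apply Tendsto.const_mul
    have hx := (theta_tendsto_one 0 (-1/(m:ℝ))).comp hy
    apply hx.congr'
    filter_upwards [self_mem_nhdsWithin] with t ht
    simp only [Function.comp]
    rw [← second_arg_eq m hmpos t ht]
    norm_num
  have heq : (fun t : ℝ => ∑ r ∈ Finset.range m,
      cexp (π * Complex.I * (2*(r:ℂ)+1)^2 / (4*(m:ℂ))) *
        jacobiTheta₂ ((2*(r:ℂ)+1)/(2*(m:ℂ))) (Complex.I / ((m:ℂ)^2*t)))
      =ᶠ[𝓝[>] (0:ℝ)] (fun t : ℝ => ((Real.sqrt m : ℝ):ℂ) * (1+Complex.I) / ((Real.sqrt 2 : ℝ):ℂ)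
      * jacobiTheta₂ 0 (-1/(-1/((m:ℂ)⁻¹ + Complex.I*t) + m))) := by
    filter_upwards [self_mem_nhdsWithin] with t ht
    exact master m hm t ht
  have hlim := tendsto_nhds_unique (hLHS.congr' heq) hRHS
  rw [mul_one] at hlim
  calc ∑ r ∈ Finset.range m, cexp (π * Complex.I * (2*(r:ℂ)+1)^2 / (4*(m:ℂ)))
      = ∑ r ∈ Finset.range m, cexp (π * Complex.I * (2*(r:ℂ)+1)^2 / (4*(m:ℂ))) * 1 := by
        simp
    _ = _ := hlim

end GaussAux


theorem odd_indexed_quadratic_gauss_sine_sum (k : ℕ) (hk : 0 < k) :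
    ∑ n ∈ Finset.Icc 1 (2 * k - 1),
        Real.sin (π * (2 * (n : ℝ) - 1) ^ 2 / (4 * (2 * (k : ℝ) - 1))) =
      Real.sqrt ((k : ℝ) - 1 / 2) := by
  have hk1 : 1 ≤ 2*k := by omega
  have hm : Odd (2*k-1) := ⟨k-1, by omega⟩
  have hmR : ((2*k-1 : ℕ):ℝ) = 2*(k:ℝ)-1 := by push_cast [Nat.cast_sub hk1]; ring
  have hG := congrArg Complex.im (GaussAux.gauss (2*k-1) hm)
  have hL : (∑ r ∈ Finset.range (2*k-1),
        Complex.exp (π * Complex.I * (2*(r:ℂ)+1)^2 / (4*((2*k-1:ℕ):ℂ)))).im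
      = ∑ r ∈ Finset.range (2*k-1), Real.sin (π*(2*(r:ℝ)+1)^2/(4*((2*k-1:ℕ):ℝ))) := by
    rw [Complex.im_sum]
    apply Finset.sum_congr rfl
    intro r _
    have e : π * Complex.I * (2*(r:ℂ)+1)^2 / (4*((2*k-1:ℕ):ℂ))
        = ((π*(2*(r:ℝ)+1)^2/(4*((2*k-1:ℕ):ℝ)) : ℝ):ℂ) * Complex.I := by
      push_cast
      ring
    rw [e, Complex.exp_ofReal_mul_I_im]
  have hR : ((((Real.sqrt ((2*k-1:ℕ)) : ℝ)):ℂ) * (1+Complex.I) / (((Real.sqrt 2 : ℝ)):ℂ)).im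
      = Real.sqrt ((2*k-1:ℕ)) / Real.sqrt 2 := by
    have e : ((((Real.sqrt ((2*k-1:ℕ)) : ℝ)):ℂ) * (1+Complex.I) / (((Real.sqrt 2 : ℝ)):ℂ))
        = (((Real.sqrt ((2*k-1:ℕ))/Real.sqrt 2 : ℝ)):ℂ) * (1+Complex.I) := by
      have h2 : (((Real.sqrt 2 : ℝ)):ℂ) ≠ 0 := by
        simp only [ne_eq, Complex.ofReal_eq_zero]
        positivity
      rw [Complex.ofReal_div]
      field_simp
    rw [e]
    simp
  rw [hL, hR] at hG
  have hre : ∑ n ∈ Finset.Icc 1 (2*k-1), Real.sin (π*(2*(n:ℝ)-1)^2/(4*(2*(k:ℝ)-1)))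
      = ∑ r ∈ Finset.range (2*k-1), Real.sin (π*(2*(r:ℝ)+1)^2/(4*((2*k-1:ℕ):ℝ))) := by
    refine Finset.sum_nbij' (i := fun n => n-1) (j := fun r => r+1) ?_ ?_ ?_ ?_ ?_
    · intro a ha
      simp only [Finset.mem_Icc] at ha
      simp only [Finset.mem_range]
      omega
    · intro a ha
      simp only [Finset.mem_range] at ha
      simp only [Finset.mem_Icc]
      omega
    · intro a ha
      simp only [Finset.mem_Icc] at ha
      omega
    · intro a ha
      omega
    · intro n hn
      simp only [Finset.mem_Icc] at hn
      have : ((n-1 : ℕ):ℝ) = (n:ℝ) - 1 := by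
        push_cast [Nat.cast_sub hn.1]
        ring
      rw [this, hmR]
      congr 1
      ring
  rw [hre, hG, show ((k:ℝ) - 1/2) = ((2*k-1:ℕ):ℝ)/2 from by rw [hmR]; ring,
    Real.sqrt_div (by positivity) 2]
end

section
/- For all positive integers k and p, the extended classical Gauss sine sum satisfies ∑_{n=1}^{pk} sin(2π n² / k) = (p/2) * √k * (1 + cos(kπ/2) - sin(kπ/2)). -/
open Finset Real Complex Filter Topology

noncomputable section


lemma sin_per (k : ℕ) (hk : 0 < k) (n : ℕ) :
    Real.sin (2 * π * ((n + k : ℕ) : ℝ) ^ 2 / k) = Real.sin (2 * π * (n : ℝ) ^ 2 / k) := by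
  have hk' : (k : ℝ) ≠ 0 := Nat.cast_ne_zero.mpr hk.ne'
  have : 2 * π * ((n + k : ℕ) : ℝ) ^ 2 / k = 2 * π * (n : ℝ) ^ 2 / k + (2 * n + k : ℕ) * (2 * π) := by
    push_cast
    field_simp
    ring
  rw [this, Real.sin_add_nat_mul_two_pi]

lemma sin_per_mul (k : ℕ) (hk : 0 < k) (m n : ℕ) :
    Real.sin (2 * π * ((m * k + n : ℕ) : ℝ) ^ 2 / k) = Real.sin (2 * π * (n : ℝ) ^ 2 / k) := by
  induction m with
  | zero => simp
  | succ m ih =>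
      have : (m + 1) * k + n = (m * k + n) + k := by ring
      rw [this, sin_per k hk (m * k + n), ih]

lemma sum_period (k p : ℕ) (hk : 0 < k) :
    ∑ n ∈ Finset.Icc 1 (p * k), Real.sin (2 * π * (n : ℝ) ^ 2 / k)
      = p * ∑ r ∈ Finset.range k, Real.sin (2 * π * (r : ℝ) ^ 2 / k) := by
  have hbase : ∑ n ∈ Finset.Ioc 0 k, Real.sin (2 * π * (n : ℝ) ^ 2 / k)
      = ∑ r ∈ Finset.range k, Real.sin (2 * π * (r : ℝ) ^ 2 / k) := by
    have h0 : Real.sin (2 * π * ((0:ℕ) : ℝ) ^ 2 / k) = 0 := by simp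
    have hkend : Real.sin (2 * π * ((k:ℕ) : ℝ) ^ 2 / k) = 0 := by
      have := sin_per k hk 0
      simpa using this
    rw [Finset.range_eq_Ico, ← Finset.Ioo_insert_right hk, ← Finset.Ioo_insert_left hk,
      Finset.sum_insert (by simp), Finset.sum_insert (by simp), hkend, h0]
  induction p with
  | zero => simp
  | succ p ih =>
      have hsplit : Finset.Icc 1 ((p+1) * k) = Finset.Ioc 0 ((p+1)*k) := by
        rw [← Finset.Icc_add_one_left_eq_Ioc, zero_add]
      have hrw : (p+1)*k = p*k + k := by ring
      have h1 : ∑ n ∈ Finset.Ioc 0 (p*k+k), Real.sin (2 * π * (n : ℝ) ^ 2 / k)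
          = ∑ n ∈ Finset.Ioc 0 (p*k), Real.sin (2 * π * (n : ℝ) ^ 2 / k)
            + ∑ n ∈ Finset.Ioc (p*k) (p*k+k), Real.sin (2 * π * (n : ℝ) ^ 2 / k) :=
        (Finset.sum_Ioc_consecutive _ (Nat.zero_le (p*k)) (Nat.le_add_right _ _)).symm
      have h2 : ∑ n ∈ Finset.Ioc (p*k) (p*k+k), Real.sin (2 * π * (n : ℝ) ^ 2 / k)
          = ∑ n ∈ Finset.Ioc 0 k, Real.sin (2 * π * (n : ℝ) ^ 2 / k) := by
        have hmap := Finset.map_add_left_Ioc 0 k (p*k)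
        simp only [add_zero] at hmap
        rw [← hmap, Finset.sum_map]
        refine Finset.sum_congr rfl fun x _ => ?_
        simp only [addLeftEmbedding_apply]
        exact sin_per_mul k hk p x
      rw [hsplit, hrw, h1, h2, hbase,
        show Finset.Ioc 0 (p*k) = Finset.Icc 1 (p*k) from (Finset.Icc_add_one_left_eq_Ioc 0 (p*k)).symm, ih]
      push_cast
      ring


lemma neg_I_pow (k : ℕ) :
    (-Complex.I)^k = (Real.cos (k*π/2) : ℂ) - (Real.sin (k*π/2) : ℂ) * Complex.I := by
  have h1 : (-Complex.I) = Complex.exp ((-(π/2) : ℝ) * Complex.I) := by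
    rw [Complex.exp_mul_I]
    simp
  rw [h1, ← Complex.exp_nat_mul, show (k : ℂ) * ((-(π/2) : ℝ) * Complex.I)
      = ((-(k*π/2) : ℝ) : ℂ) * Complex.I by push_cast; ring,
    Complex.exp_mul_I, ← Complex.ofReal_cos, ← Complex.ofReal_sin,
    Real.cos_neg, Real.sin_neg]
  push_cast
  ring

lemma im_extract (k : ℕ) (hk : 0 < k)
    (h : ∑ r ∈ Finset.range k, Complex.exp (2*π*Complex.I*(r:ℂ)^2/k)
      = (Real.sqrt k : ℂ) * (1+Complex.I) * (1+(-Complex.I)^k) / 2) :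
    ∑ r ∈ Finset.range k, Real.sin (2*π*(r:ℝ)^2/k)
      = Real.sqrt k / 2 * (1 + Real.cos (k*π/2) - Real.sin (k*π/2)) := by
  have him := congrArg Complex.im h
  rw [Complex.im_sum] at him
  have hterm : ∀ r ∈ Finset.range k,
      (Complex.exp (2*π*Complex.I*(r:ℂ)^2/k)).im = Real.sin (2*π*(r:ℝ)^2/k) := by
    intro r _
    rw [show 2*π*Complex.I*(r:ℂ)^2/k = ((2*π*(r:ℝ)^2/k : ℝ) : ℂ) * Complex.I by
      push_cast; ring, Complex.exp_ofReal_mul_I_im]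
  rw [Finset.sum_congr rfl hterm] at him
  rw [him, neg_I_pow]
  have hdecomp : (Real.sqrt k : ℂ) * (1+Complex.I) *
      (1+((Real.cos (k*π/2) : ℂ) - (Real.sin (k*π/2) : ℂ) * Complex.I)) / 2
      = ((Real.sqrt k * (1 + Real.cos (k*π/2) + Real.sin (k*π/2)) / 2 : ℝ) : ℂ)
        + ((Real.sqrt k * (1 + Real.cos (k*π/2) - Real.sin (k*π/2)) / 2 : ℝ) : ℂ) * Complex.I := by
    rw [Complex.ext_iff]
    constructor <;> · push_cast; simp [Complex.mul_re, Complex.mul_im, Complex.div_re,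
      Complex.div_im]; ring
  rw [hdecomp]
  simp only [Complex.add_im, Complex.mul_im, Complex.ofReal_re, Complex.ofReal_im,
    Complex.I_re, Complex.I_im, mul_zero, mul_one, zero_add, add_zero, zero_mul]
  ring


-- summability of Gaussian-type series with bounded coefficients
lemma summable_gauss_core {β : ℂ} (hβ : 0 < β.re) (c : ℤ → ℂ) (hc : ∀ n, ‖c n‖ ≤ 1) :
    Summable (fun n : ℤ ↦ c n * Complex.exp (-π * β * (n:ℂ)^2)) := by
  have hb : Summable (fun n : ℤ ↦ Real.exp (-π * (β.re * (n:ℝ)^2))) := by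
    have := summable_pow_mul_jacobiTheta₂_term_bound 0 hβ 0
    simpa using this
  apply Summable.of_norm_bounded hb
  intro n
  have hnorm : ‖Complex.exp (-(π:ℂ) * β * (n:ℂ)^2)‖ = Real.exp ((-(π:ℂ) * β * (n:ℂ)^2).re) := by
    rw [Complex.norm_exp]
  rw [norm_mul, hnorm]
  have hre : (-(π:ℂ) * β * (n:ℂ)^2).re = -π * (β.re * (n:ℝ)^2) := by
    have h2 : (-(π:ℂ)) * β * ((n:ℂ))^2 = ((-π * (n:ℝ)^2 : ℝ) : ℂ) * β := by push_cast; ring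
    rw [h2, Complex.re_ofReal_mul]
    ring
  rw [hre]
  calc ‖c n‖ * Real.exp (-π * (β.re * (n:ℝ)^2))
      ≤ 1 * Real.exp (-π * (β.re * (n:ℝ)^2)) := by
        exact mul_le_mul_of_nonneg_right (hc n) (Real.exp_nonneg _)
    _ = Real.exp (-π * (β.re * (n:ℝ)^2)) := one_mul _

-- Poisson summation for shifted Gaussian
lemma poisson_shift {β : ℂ} (hβ : 0 < β.re) (x : ℝ) :
    ∑' m : ℤ, Complex.exp (-π * β * ((m:ℂ) + x)^2)
      = 1 / β ^ (1/2 : ℂ) *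
        ∑' j : ℤ, Complex.exp (2*π*Complex.I*(j:ℂ)*(x:ℂ)) * Complex.exp (-π*(j:ℂ)^2/β) := by
  have hβ0 : β ≠ 0 := by intro h; rw [h] at hβ; simp at hβ
  have key := Complex.tsum_exp_neg_quadratic hβ (-(β * x))
  have hL : ∀ m : ℤ, Complex.exp (-↑π * β * (m:ℂ)^2 + 2*↑π*(-(β*(x:ℂ)))*(m:ℂ))
      = Complex.exp (-↑π * β * ((m:ℂ) + x)^2) * Complex.exp (↑π*β*(x:ℂ)^2) := by
    intro m; rw [← Complex.exp_add]; congr 1; ring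
  have hR : ∀ j : ℤ, Complex.exp (-↑π/β*((j:ℂ) + Complex.I*(-(β*(x:ℂ))))^2)
      = Complex.exp (2*↑π*Complex.I*(j:ℂ)*(x:ℂ)) * Complex.exp (-↑π*(j:ℂ)^2/β)
        * Complex.exp (↑π*β*(x:ℂ)^2) := by
    intro j
    rw [← Complex.exp_add, ← Complex.exp_add]; congr 1
    field_simp
    ring_nf
    rw [Complex.I_sq]
    ring
  rw [tsum_congr hL, tsum_congr hR, tsum_mul_right, tsum_mul_right] at key
  have hexp0 : Complex.exp (↑π*β*(x:ℂ)^2) ≠ 0 := Complex.exp_ne_zero _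
  apply mul_right_cancel₀ hexp0
  rw [key]
  ring

-- grouping a sum over ℤ by residues mod d
lemma tsum_int_mod {f : ℤ → ℂ} (hf : Summable f) (d : ℕ) (hd : 0 < d) :
    ∑' n : ℤ, f n = ∑ r ∈ Finset.range d, ∑' m : ℤ, f (m * d + r) := by
  haveI : NeZero d := ⟨hd.ne'⟩
  have he : Summable (fun p : ℤ × Fin d ↦ f ((Int.divModEquiv d).symm p)) :=
    (Int.divModEquiv d).symm.summable_iff.mpr hf
  rw [← (Int.divModEquiv d).symm.tsum_eq f]
  have : ∀ p : ℤ × Fin d, f ((Int.divModEquiv d).symm p) = f (p.1 * d + (p.2 : ℤ)) := by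
    intro p; rfl
  rw [tsum_congr this] at *
  rw [Summable.tsum_prod (by simpa [Int.divModEquiv] using he)]
  rw [tsum_congr (fun q : ℤ => tsum_fintype (fun r : Fin d => f (q * d + (r:ℤ))))]
  rw [Summable.tsum_finsetSum]
  · rw [← Fin.sum_univ_eq_sum_range (fun r => ∑' m : ℤ, f (m * d + (r:ℤ)))]
  · intro r _
    apply hf.comp_injective
    intro a b hab
    simp only at hab
    have : a * (d:ℤ) = b * d := by omega
    exact mul_right_cancel₀ (by exact_mod_cast hd.ne' : (d:ℤ) ≠ 0) this

-- theta decomposition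
lemma theta_decomp {β : ℂ} (hβ : 0 < β.re) {d : ℕ} (hd : 0 < d) (c : ℤ → ℂ)
    (hper : ∀ m r : ℤ, c (m * d + r) = c r) (hbd : ∀ n, ‖c n‖ ≤ 1) :
    ∑' n : ℤ, c n * Complex.exp (-π * β * (n:ℂ)^2)
      = 1 / (β * (d:ℂ)^2) ^ (1/2 : ℂ) *
        ∑ r ∈ Finset.range d, c r *
          ∑' j : ℤ, Complex.exp (2*π*Complex.I*(j:ℂ)*(((r:ℝ)/d : ℝ):ℂ))
            * Complex.exp (-π*(j:ℂ)^2/(β*(d:ℂ)^2)) := by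
  have hd0 : (d:ℂ) ≠ 0 := Nat.cast_ne_zero.mpr hd.ne'
  have hd0' : (d:ℝ) ≠ 0 := Nat.cast_ne_zero.mpr hd.ne'
  have hβ2 : 0 < (β * (d:ℂ)^2).re := by
    have : (β * (d:ℂ)^2) = ((d:ℝ)^2 : ℝ) * β := by push_cast; ring
    rw [this, Complex.re_ofReal_mul]
    positivity
  have hsum := summable_gauss_core hβ c hbd
  rw [tsum_int_mod hsum d hd, Finset.mul_sum]
  refine Finset.sum_congr rfl fun r _ => ?_
  have hterm : ∀ m : ℤ, c (m * d + r) * Complex.exp (-π * β * ((m * d + r : ℤ):ℂ)^2)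
      = c r * Complex.exp (-π * (β * (d:ℂ)^2) * ((m:ℂ) + (((r:ℝ)/d : ℝ):ℂ))^2) := by
    intro m
    rw [hper m r]
    congr 2
    push_cast
    field_simp
  rw [tsum_congr hterm, tsum_mul_left, poisson_shift hβ2 ((r:ℝ)/d)]
  ring

-- limit of the inner theta sums
lemma tendsto_theta_inner {ι : Type*} {l : Filter ι} {B : ι → ℂ}
    (hRe : Filter.Tendsto (fun i ↦ (1 / B i).re) l Filter.atTop)
    (g : ℤ → ℂ) (hg : ∀ n, ‖g n‖ ≤ 1) :
    Filter.Tendsto (fun i ↦ ∑' j : ℤ, g j * Complex.exp (-π * (j:ℂ)^2 / B i)) l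
      (𝓝 (g 0)) := by
  have hre_eq : ∀ (i : ι) (j : ℤ), (-(π:ℂ) * (j:ℂ)^2 / B i).re = -π * (j:ℝ)^2 * (1 / B i).re := by
    intro i j
    have h2 : -(π:ℂ) * (j:ℂ)^2 / B i = ((-π * (j:ℝ)^2 : ℝ) : ℂ) * (1 / B i) := by
      push_cast; ring
    rw [h2, Complex.re_ofReal_mul]
  have hnorm : ∀ (i : ι) (j : ℤ), ‖g j * Complex.exp (-π * (j:ℂ)^2 / B i)‖
      = ‖g j‖ * Real.exp (-π * (j:ℝ)^2 * (1 / B i).re) := by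
    intro i j
    rw [norm_mul, Complex.norm_exp, hre_eq]
  have hg0 : g 0 = ∑' j : ℤ, (if j = 0 then g 0 else 0) := by
    rw [tsum_eq_single 0 (fun b hb => if_neg hb), if_pos rfl]
  rw [hg0]
  apply tendsto_tsum_of_dominated_convergence (bound := fun j : ℤ ↦ Real.exp (-π * (j:ℝ)^2))
  · have := summable_pow_mul_jacobiTheta₂_term_bound 0 one_pos 0
    simpa using this
  · intro j
    by_cases hj : j = 0
    · subst hj
      simp only [if_pos rfl]
      have : ∀ i, g 0 * Complex.exp (-π * ((0:ℤ):ℂ)^2 / B i) = g 0 := by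
        intro i; norm_num
      exact Filter.Tendsto.congr (fun i => (this i).symm) tendsto_const_nhds
    · rw [if_neg hj]
      rw [tendsto_zero_iff_norm_tendsto_zero]
      have hb : Filter.Tendsto (fun i ↦ Real.exp (-π * (j:ℝ)^2 * (1 / B i).re)) l (𝓝 0) := by
        apply Real.tendsto_exp_atBot.comp
        have hj2 : 0 < π * (j:ℝ)^2 := by
          have : (j:ℝ) ≠ 0 := Int.cast_ne_zero.mpr hj
          positivity
        have := Filter.Tendsto.const_mul_atTop hj2 hRe
        -- this : Tendsto (fun i ↦ π * j^2 * (1/B i).re) l atTop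
        have h3 : Filter.Tendsto (fun i ↦ -(π * (j:ℝ)^2 * (1 / B i).re)) l Filter.atBot :=
          Filter.tendsto_neg_atBot_iff.mpr this
        refine h3.congr fun i => by ring
      apply squeeze_zero (fun i => norm_nonneg _) (fun i => ?_) hb
      rw [hnorm]
      calc ‖g j‖ * Real.exp (-π * (j:ℝ)^2 * (1 / B i).re)
          ≤ 1 * Real.exp (-π * (j:ℝ)^2 * (1 / B i).re) :=
            mul_le_mul_of_nonneg_right (hg j) (Real.exp_nonneg _)
        _ = _ := one_mul _
  · filter_upwards [hRe.eventually_ge_atTop 1] with i hi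
    intro j
    rw [hnorm]
    calc ‖g j‖ * Real.exp (-π * (j:ℝ)^2 * (1 / B i).re)
        ≤ 1 * Real.exp (-π * (j:ℝ)^2 * (1 / B i).re) :=
          mul_le_mul_of_nonneg_right (hg j) (Real.exp_nonneg _)
      _ ≤ Real.exp (-π * (j:ℝ)^2) := by
          rw [one_mul, Real.exp_le_exp]
          nlinarith [mul_nonneg (mul_nonneg Real.pi_pos.le (sq_nonneg (j:ℝ)))
            (sub_nonneg.mpr hi)]

lemma cpow_half_sq (z : ℂ) : (z ^ (1/2 : ℂ))^2 = z := by
  rw [show (1/2 : ℂ) = ((2:ℕ) : ℂ)⁻¹ by norm_num]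
  exact Complex.cpow_nat_inv_pow z two_ne_zero

lemma cpow_half_im_lt_re {z : ℂ} (hz : 0 < z.re) : |(z ^ (1/2:ℂ)).im| < (z ^ (1/2:ℂ)).re := by
  have hz0 : z ≠ 0 := by intro h; rw [h] at hz; simp at hz
  have harg : |Complex.arg z| < π / 2 := Complex.abs_arg_lt_pi_div_two_iff.mpr (Or.inl hz)
  rw [Complex.cpow_def_of_ne_zero hz0, Complex.exp_re, Complex.exp_im]
  have him : (Complex.log z * (1/2 : ℂ)).im = Complex.arg z / 2 := by
    simp [Complex.mul_im, Complex.log_im]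
    ring
  rw [him]
  set t := (Complex.log z * (1/2 : ℂ)).re
  set θ := Complex.arg z / 2 with hθdef
  have hθ : |θ| < π / 4 := by
    rw [hθdef, abs_div, _root_.abs_two]
    linarith
  have hπ := Real.pi_pos
  have habs_sin : |Real.sin θ| = Real.sin |θ| := by
    rcases le_or_gt 0 θ with h | h
    · rw [_root_.abs_of_nonneg h, _root_.abs_of_nonneg (Real.sin_nonneg_of_nonneg_of_le_pi h (by
        rw [_root_.abs_of_nonneg h] at hθ; linarith))]
    · rw [_root_.abs_of_neg h, Real.sin_neg, _root_.abs_of_nonpos ?_]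
      exact Real.sin_nonpos_of_nonpos_of_neg_pi_le h.le (by
        rw [_root_.abs_of_neg h] at hθ; linarith)
  have hcos : Real.cos θ = Real.cos |θ| := (Real.cos_abs θ).symm
  have hkey : Real.sin |θ| < Real.cos |θ| := by
    rw [← Real.sin_pi_div_two_sub]
    apply Real.strictMonoOn_sin ?_ ?_ ?_
    · constructor <;> [linarith [abs_nonneg θ]; linarith]
    · constructor <;> [linarith [abs_nonneg θ]; linarith [abs_nonneg θ]]
    · linarith
  have hexp := Real.exp_pos t
  rw [_root_.abs_mul, _root_.abs_of_pos hexp, habs_sin, hcos]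
  exact (mul_lt_mul_iff_right₀ hexp).mpr hkey

lemma mul_re_pos_of_im_lt_re {u v : ℂ} (hu : |u.im| < u.re) (hv : |v.im| < v.re) :
    0 < (u * v).re := by
  rw [Complex.mul_re]
  have h1 : |u.im| * |v.im| < u.re * v.re :=
    mul_lt_mul'' hu hv (abs_nonneg _) (abs_nonneg _)
  have h2 : u.im * v.im ≤ |u.im| * |v.im| := by
    rw [← abs_mul]; exact le_abs_self _
  linarith

lemma sq_eq_of_re_pos {x y : ℂ} (h : x^2 = y^2) (hx : 0 < x.re) (hy : 0 < y.re) : x = y := by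
  have h2 : (x - y) * (x + y) = 0 := by linear_combination h
  rcases mul_eq_zero.mp h2 with h3 | h3
  · exact sub_eq_zero.mp h3
  · exfalso
    have hxy : x = -y := by linear_combination h3
    have : x.re = -y.re := by rw [hxy, Complex.neg_re]
    linarith


noncomputable def Fg (k : ℕ) (ε : ℝ) : ℂ :=
  ∑' n : ℤ, Complex.exp (-π * ((ε:ℂ) - 2*Complex.I/k) * (n:ℂ)^2)

noncomputable def Sg (k r : ℕ) (ε : ℝ) : ℂ :=
  ∑' j : ℤ, Complex.exp (2*π*Complex.I*(j:ℂ)*(((r:ℝ)/k : ℝ):ℂ))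
    * Complex.exp (-π*(j:ℂ)^2/(((ε:ℂ))*(k:ℂ)^2))

noncomputable def cg (k : ℕ) : ℤ → ℂ :=
  fun n ↦ Complex.exp (((2 * π * (n:ℝ)^2 / k : ℝ) : ℂ) * Complex.I)

lemma cg_norm (k : ℕ) (n : ℤ) : ‖cg k n‖ = 1 := by
  rw [cg, Complex.norm_exp_ofReal_mul_I]

lemma cg_per (k : ℕ) (hk : 0 < k) : ∀ m r : ℤ, cg k (m * k + r) = cg k r := by
  intro m r
  have hk0 : (k:ℂ) ≠ 0 := Nat.cast_ne_zero.mpr hk.ne'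
  rw [cg, cg, show ((2 * π * ((m * k + r : ℤ):ℝ)^2 / k : ℝ) : ℂ) * Complex.I
      = ((2 * π * ((r:ℤ):ℝ)^2 / k : ℝ) : ℂ) * Complex.I
        + ((m*(m*k+2*r) : ℤ) : ℂ) * (2*(π:ℂ)*Complex.I) by
    push_cast
    field_simp
    ring]
  rw [Complex.exp_add, Complex.exp_int_mul_two_pi_mul_I, mul_one]

-- the limit of √ε • Fg from the arithmetic side
lemma claim1 (k : ℕ) (hk : 0 < k) :
    Filter.Tendsto (fun ε : ℝ ↦ (Real.sqrt ε : ℂ) * Fg k ε) (𝓝[>] (0:ℝ))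
      (𝓝 ((∑ r ∈ Finset.range k, cg k (r:ℤ)) / k)) := by
  have hk0 : (k:ℂ) ≠ 0 := Nat.cast_ne_zero.mpr hk.ne'
  have hk0' : (k:ℝ) ≠ 0 := Nat.cast_ne_zero.mpr hk.ne'
  have heq : ∀ᶠ ε in 𝓝[>] (0:ℝ), (Real.sqrt ε : ℂ) * Fg k ε
      = (1/(k:ℂ)) * ∑ r ∈ Finset.range k, cg k (r:ℤ) * Sg k r ε := by
    filter_upwards [self_mem_nhdsWithin] with ε hε
    have hε : (0:ℝ) < ε := hε
    have hβ : 0 < ((ε:ℂ)).re := by simpa using hε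
    have hsplit : ∀ n : ℤ, Complex.exp (-π * ((ε:ℂ) - 2*Complex.I/k) * (n:ℂ)^2)
        = cg k n * Complex.exp (-π * ((ε:ℂ)) * (n:ℂ)^2) := by
      intro n
      rw [cg, ← Complex.exp_add]
      congr 1
      push_cast
      field_simp
      ring
    have hdec := theta_decomp hβ hk (cg k) (cg_per k hk) (fun n => le_of_eq (cg_norm k n))
    have hpre : ((ε:ℂ) * (k:ℂ)^2) ^ (1/2 : ℂ) = ((Real.sqrt ε * k : ℝ) : ℂ) := by
      have h1 : ((ε:ℂ) * (k:ℂ)^2) = (((ε * k^2 : ℝ)) : ℂ) := by push_cast; ring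
      rw [h1, show (1/2 : ℂ) = ((1/2 : ℝ) : ℂ) by norm_num,
        ← Complex.ofReal_cpow (by positivity)]
      congr 1
      rw [← Real.sqrt_eq_rpow, Real.sqrt_mul hε.le, Real.sqrt_sq (Nat.cast_nonneg k)]
    rw [Fg, tsum_congr hsplit, hdec, hpre]
    simp only [Sg]
    rw [← mul_assoc]
    congr 1
    rw [Complex.ofReal_mul]
    have hs0 : ((Real.sqrt ε : ℝ):ℂ) ≠ 0 := by
      simp only [ne_eq, Complex.ofReal_eq_zero]
      positivity
    field_simp
    rw [Complex.ofReal_natCast, div_self hk0]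
  rw [show (∑ r ∈ Finset.range k, cg k (r:ℤ)) / k
      = (1/(k:ℂ)) * ∑ r ∈ Finset.range k, cg k (r:ℤ) * 1 by
    simp only [mul_one]; rw [div_eq_mul_inv, mul_comm, one_div]]
  apply Filter.Tendsto.congr' (Filter.EventuallyEq.symm heq)
  apply Filter.Tendsto.const_mul
  apply tendsto_finset_sum
  intro r _
  apply Filter.Tendsto.const_mul
  rw [show (1:ℂ) = Complex.exp (2*π*Complex.I*((0:ℤ):ℂ)*(((r:ℝ)/k : ℝ):ℂ)) by simp]
  unfold Sg
  have hRe : Filter.Tendsto (fun ε : ℝ ↦ (1 / ((ε:ℂ) * (k:ℂ)^2)).re) (𝓝[>] (0:ℝ))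
      Filter.atTop := by
    have h1 : Filter.Tendsto (fun ε : ℝ ↦ ε * (k:ℝ)^2) (𝓝[>] (0:ℝ)) (𝓝[>] (0:ℝ)) := by
      apply tendsto_nhdsWithin_of_tendsto_nhds_of_eventually_within
      · have := (continuous_id.mul (continuous_const (y := ((k:ℝ)^2)))).tendsto (0:ℝ)
        convert this.mono_left nhdsWithin_le_nhds using 2 <;> simp
      · filter_upwards [self_mem_nhdsWithin] with ε (hε : (0:ℝ) < ε)
        have : (0:ℝ) < (k:ℝ)^2 := by positivity
        exact mul_pos hε this
    have h2 := h1.inv_tendsto_nhdsGT_zero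
    apply h2.congr
    intro ε
    rw [show ((ε:ℂ) * (k:ℂ)^2) = (((ε * (k:ℝ)^2 : ℝ)) : ℂ) by push_cast; ring,
      one_div, ← Complex.ofReal_inv, Complex.ofReal_re]
    rfl
  exact tendsto_theta_inner (l := 𝓝[>] (0:ℝ)) hRe
    (fun j : ℤ ↦ Complex.exp (2*π*Complex.I*(j:ℂ)*(((r:ℝ)/k : ℝ):ℂ)))
    (fun j => by
      show ‖Complex.exp (2*π*Complex.I*(j:ℂ)*(((r:ℝ)/k : ℝ):ℂ))‖ ≤ 1
      rw [show 2*(π:ℂ)*Complex.I*(j:ℂ)*(((r:ℝ)/k : ℝ):ℂ)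
          = ((2*π*(j:ℝ)*((r:ℝ)/k) : ℝ) : ℂ) * Complex.I by push_cast; ring,
        Complex.norm_exp_ofReal_mul_I])


lemma I_pow3 : Complex.I^3 = -Complex.I := by
  rw [pow_succ, Complex.I_sq]; ring

lemma I_pow4 : Complex.I^4 = 1 := by
  rw [pow_succ, I_pow3]; simp [Complex.I_mul_I]


noncomputable def c2 (k : ℕ) : ℤ → ℂ :=
  fun n ↦ Complex.exp (((-(π * k * (n:ℝ)^2) / 2 : ℝ) : ℂ) * Complex.I)

noncomputable def b2 (k : ℕ) (ε : ℝ) : ℂ := 1/((ε:ℂ) - 2*Complex.I/k) - Complex.I*k/2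

noncomputable def Tg (k r : ℕ) (ε : ℝ) : ℂ :=
  ∑' j : ℤ, Complex.exp (2*π*Complex.I*(j:ℂ)*(((r:ℝ)/((2:ℕ):ℝ) : ℝ):ℂ))
    * Complex.exp (-π*(j:ℂ)^2/(b2 k ε*((2:ℕ):ℂ)^2))

lemma c2_norm (k : ℕ) (n : ℤ) : ‖c2 k n‖ = 1 := by
  rw [c2, Complex.norm_exp_ofReal_mul_I]

lemma c2_per (k : ℕ) : ∀ m r : ℤ, c2 k (m * 2 + r) = c2 k r := by
  intro m r
  rw [c2, c2, show ((-(π * k * ((m * 2 + r : ℤ):ℝ)^2) / 2 : ℝ) : ℂ) * Complex.I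
      = ((-(π * k * ((r:ℤ):ℝ)^2) / 2 : ℝ) : ℂ) * Complex.I
        + ((-((k:ℤ)*(m*m + m*r)) : ℤ) : ℂ) * (2*(π:ℂ)*Complex.I) by
    push_cast
    ring]
  rw [Complex.exp_add, Complex.exp_int_mul_two_pi_mul_I, mul_one]

lemma c2_zero (k : ℕ) : c2 k 0 = 1 := by simp [c2]

lemma c2_one (k : ℕ) : c2 k 1 = (-Complex.I)^k := by
  rw [c2, show ((-(π * (k:ℕ) * ((1:ℤ):ℝ)^2) / 2 : ℝ) : ℂ) = ((-((k:ℝ)*π/2) : ℝ) : ℂ) by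
    push_cast; ring]
  rw [Complex.exp_mul_I, ← Complex.ofReal_cos, ← Complex.ofReal_sin,
    Real.cos_neg, Real.sin_neg, neg_I_pow]
  push_cast
  ring

lemma a_re (k : ℕ) (ε : ℝ) : ((ε:ℂ) - 2*Complex.I/(k:ℂ)).re = ε := by
  simp [Complex.div_re]

lemma claim2 (k : ℕ) (hk : 0 < k) :
    Filter.Tendsto (fun ε : ℝ ↦ (Real.sqrt ε : ℂ) * Fg k ε) (𝓝[>] (0:ℝ))
      (𝓝 ((1+Complex.I) * (1 + (-Complex.I)^k) / (2 * (Real.sqrt k : ℂ)))) := by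
  have hk0 : (k:ℂ) ≠ 0 := Nat.cast_ne_zero.mpr hk.ne'
  have hk0' : (k:ℝ) ≠ 0 := Nat.cast_ne_zero.mpr hk.ne'
  have hkpos' : (0:ℝ) < k := Nat.cast_pos.mpr hk
  -- positivity facts for ε > 0
  have ha0 : ∀ ε : ℝ, 0 < ε → ((ε:ℂ) - 2*Complex.I/(k:ℂ)) ≠ 0 := by
    intro ε hε h
    have := a_re k ε
    rw [h] at this
    simp at this
    linarith
  have hb2re : ∀ ε : ℝ, 0 < ε → 0 < (b2 k ε).re := by
    intro ε hε
    have h1 : (Complex.I*(k:ℂ)/2).re = 0 := by simp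
    have : (b2 k ε).re = (((ε:ℂ) - 2*Complex.I/(k:ℂ))⁻¹).re := by
      rw [b2, Complex.sub_re, one_div, h1, sub_zero]
    rw [this, Complex.inv_re]
    apply div_pos
    · rw [a_re]; exact hε
    · rw [Complex.normSq_pos]; exact ha0 ε hε
  have hb4re : ∀ ε : ℝ, 0 < ε → 0 < (b2 k ε * ((2:ℕ):ℂ)^2).re := by
    intro ε hε
    rw [show b2 k ε * ((2:ℕ):ℂ)^2 = ((4:ℝ):ℂ) * b2 k ε by push_cast; ring,
      Complex.re_ofReal_mul]
    have := hb2re ε hε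
    linarith
  -- the key product identity
  have hprod : ∀ ε : ℝ, 0 < ε → ((ε:ℂ) - 2*Complex.I/(k:ℂ)) * (b2 k ε * ((2:ℕ):ℂ)^2)
      = -2*Complex.I*(k:ℂ)*(ε:ℂ) := by
    intro ε hε
    have hden : (ε:ℂ)*(k:ℂ) - 2*Complex.I ≠ 0 := by
      have h1 : ((ε:ℂ) - 2*Complex.I/(k:ℂ)) * k ≠ 0 := mul_ne_zero (ha0 ε hε) hk0
      have h2 : ((ε:ℂ) - 2*Complex.I/(k:ℂ)) * k = (ε:ℂ)*(k:ℂ) - 2*Complex.I := by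
        field_simp
      rwa [h2] at h1
    rw [b2]
    field_simp [hden]
    ring_nf
    simp only [Complex.I_sq, I_pow3, I_pow4]
    ring
  -- constant evaluation
  have hconst : ∀ ε : ℝ, 0 < ε →
      (Real.sqrt ε : ℂ) * (1/((ε:ℂ) - 2*Complex.I/(k:ℂ)) ^ (1/2 : ℂ))
        * (1/(b2 k ε * ((2:ℕ):ℂ)^2) ^ (1/2 : ℂ))
      = (1+Complex.I) / (2 * (Real.sqrt k : ℂ)) := by
    intro ε hε
    set a : ℂ := (ε:ℂ) - 2*Complex.I/(k:ℂ) with ha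
    set b : ℂ := b2 k ε * ((2:ℕ):ℂ)^2 with hb
    set u : ℂ := a ^ (1/2 : ℂ) with hu
    set v : ℂ := b ^ (1/2 : ℂ) with hv
    have hare : 0 < a.re := by rw [ha, a_re]; exact hε
    have hbre : 0 < b.re := hb4re ε hε
    have huv : u * v = ((Real.sqrt (k*ε) : ℝ) : ℂ) * (1 - Complex.I) := by
      apply sq_eq_of_re_pos
      · rw [mul_pow, hu, hv, cpow_half_sq, cpow_half_sq, mul_pow,
          ← Complex.ofReal_pow, Real.sq_sqrt (by positivity : (0:ℝ) ≤ (k:ℝ)*ε)]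
        rw [ha, hb, hprod ε hε]
        push_cast
        ring_nf
        simp only [Complex.I_sq, I_pow3, I_pow4]
        ring
      · exact mul_re_pos_of_im_lt_re (cpow_half_im_lt_re hare) (cpow_half_im_lt_re hbre)
      · rw [Complex.re_ofReal_mul]
        have : ((1:ℂ) - Complex.I).re = 1 := by simp
        rw [this, mul_one]
        exact Real.sqrt_pos.mpr (by positivity)
    have hu0 : u ≠ 0 := by
      intro h
      have := cpow_half_im_lt_re hare
      rw [← hu, h] at this
      simp at this
    have hv0 : v ≠ 0 := by
      intro h
      have := cpow_half_im_lt_re hbre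
      rw [← hv, h] at this
      simp at this
    have hy0 : ((Real.sqrt (k*ε) : ℝ) : ℂ) ≠ 0 := by
      simp only [ne_eq, Complex.ofReal_eq_zero]
      positivity
    have h1I : (1:ℂ) - Complex.I ≠ 0 := by
      intro h
      have := congrArg Complex.re h
      simp at this
    have hsk : ((Real.sqrt k : ℝ) : ℂ) ≠ 0 := by
      simp only [ne_eq, Complex.ofReal_eq_zero]
      positivity
    have hse : ((Real.sqrt ε : ℝ) : ℂ) ≠ 0 := by
      simp only [ne_eq, Complex.ofReal_eq_zero]
      positivity
    have hsplit : Real.sqrt (k*ε) = Real.sqrt k * Real.sqrt ε :=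
      Real.sqrt_mul (Nat.cast_nonneg k) ε
    rw [show (Real.sqrt ε : ℂ) * (1/u) * (1/v) = (Real.sqrt ε : ℂ) / (u*v) by
      field_simp]
    rw [huv, hsplit]
    rw [div_eq_div_iff (by push_cast; exact mul_ne_zero (mul_ne_zero hsk hse) h1I)
      (by exact mul_ne_zero two_ne_zero hsk)]
    push_cast
    ring_nf
    simp only [Complex.I_sq, I_pow3, I_pow4]
    ring
  -- the inverse identity for the limit of the inner sums
  have hX0 : ∀ ε : ℝ, 0 < ε → (b2 k ε * ((2:ℕ):ℂ)^2) ≠ 0 := by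
    intro ε hε h
    have := hb4re ε hε
    rw [h] at this
    simp at this
  have hinv : ∀ ε : ℝ, 0 < ε → 1/(b2 k ε * ((2:ℕ):ℂ)^2)
      = ((1/((k:ℝ)^2*ε) : ℝ):ℂ) + ((1/(2*(k:ℝ)) : ℝ):ℂ)*Complex.I := by
    intro ε hε
    symm
    apply eq_one_div_of_mul_eq_one_left
    have hden : (ε:ℂ)*(k:ℂ) - 2*Complex.I ≠ 0 := by
      have h1 : ((ε:ℂ) - 2*Complex.I/(k:ℂ)) * k ≠ 0 := mul_ne_zero (ha0 ε hε) hk0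
      have h2 : ((ε:ℂ) - 2*Complex.I/(k:ℂ)) * k = (ε:ℂ)*(k:ℂ) - 2*Complex.I := by
        field_simp
      rwa [h2] at h1
    have hε0 : (ε:ℂ) ≠ 0 := by
      simp only [ne_eq, Complex.ofReal_eq_zero]
      exact hε.ne'
    rw [b2]
    push_cast
    field_simp [hden, hε0, hk0]
    ring_nf
    simp only [Complex.I_sq, I_pow3, I_pow4]
    ring
    have hden' : (k:ℂ)*ε - Complex.I*2 ≠ 0 := by
      rw [show (k:ℂ)*ε - Complex.I*2 = ε*k - 2*Complex.I by ring]; exact hden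
    have h := inv_mul_cancel₀ hden'
    linear_combination (2*Complex.I)*h + (4*((k:ℂ)*ε - Complex.I*2)⁻¹)*Complex.I_sq
  have hRe2 : Filter.Tendsto (fun ε : ℝ ↦ (1/(b2 k ε * ((2:ℕ):ℂ)^2)).re) (𝓝[>] (0:ℝ))
      Filter.atTop := by
    have h1 : Filter.Tendsto (fun ε : ℝ ↦ (k:ℝ)^2 * ε) (𝓝[>] (0:ℝ)) (𝓝[>] (0:ℝ)) := by
      apply tendsto_nhdsWithin_of_tendsto_nhds_of_eventually_within
      · have := (continuous_const.mul continuous_id :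
            Continuous fun x : ℝ => (k:ℝ)^2 * x).tendsto (0:ℝ)
        convert this.mono_left nhdsWithin_le_nhds using 2 <;> simp
      · filter_upwards [self_mem_nhdsWithin] with ε (hε : (0:ℝ) < ε)
        have h2 : (0:ℝ) < (k:ℝ)^2 := by positivity
        exact mul_pos h2 hε
    have h2 := h1.inv_tendsto_nhdsGT_zero
    apply h2.congr'
    filter_upwards [self_mem_nhdsWithin] with ε (hε : (0:ℝ) < ε)
    show ((k:ℝ)^2*ε)⁻¹ = _
    rw [hinv ε hε]
    simp only [Complex.add_re, Complex.ofReal_re, Complex.mul_re, Complex.ofReal_im,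
      Complex.I_re, Complex.I_im, one_div, mul_zero, zero_mul, mul_one, sub_zero, add_zero,
      zero_sub, neg_zero]
  -- limits of the inner sums
  have hT : ∀ r : ℕ, Filter.Tendsto (fun ε : ℝ ↦ Tg k r ε) (𝓝[>] (0:ℝ)) (𝓝 1) := by
    intro r
    rw [show (1:ℂ) = Complex.exp (2*π*Complex.I*((0:ℤ):ℂ)*(((r:ℝ)/((2:ℕ):ℝ) : ℝ):ℂ)) by simp]
    simp only [Tg]
    exact tendsto_theta_inner hRe2
      (fun j : ℤ ↦ Complex.exp (2*π*Complex.I*(j:ℂ)*(((r:ℝ)/((2:ℕ):ℝ) : ℝ):ℂ)))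
      (fun j => by
        show ‖Complex.exp (2*π*Complex.I*(j:ℂ)*(((r:ℝ)/((2:ℕ):ℝ) : ℝ):ℂ))‖ ≤ 1
        rw [show 2*(π:ℂ)*Complex.I*(j:ℂ)*(((r:ℝ)/((2:ℕ):ℝ) : ℝ):ℂ)
            = ((2*π*(j:ℝ)*((r:ℝ)/((2:ℕ):ℝ)) : ℝ) : ℂ) * Complex.I by push_cast; ring,
          Complex.norm_exp_ofReal_mul_I])
  -- eventual equality
  have heq : ∀ᶠ ε in 𝓝[>] (0:ℝ), (Real.sqrt ε : ℂ) * Fg k ε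
      = ((1+Complex.I) / (2 * (Real.sqrt k : ℂ))) * ∑ r ∈ Finset.range 2, c2 k r * Tg k r ε := by
    filter_upwards [self_mem_nhdsWithin] with ε (hε : (0:ℝ) < ε)
    have hPo := Complex.tsum_exp_neg_mul_int_sq
      (show 0 < ((ε:ℂ) - 2*Complex.I/(k:ℂ)).re by rw [a_re]; exact hε)
    have htrans : ∀ n : ℤ, Complex.exp (-π/((ε:ℂ) - 2*Complex.I/(k:ℂ)) * (n:ℂ)^2)
        = c2 k n * Complex.exp (-π * b2 k ε * (n:ℂ)^2) := by
      intro n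
      rw [c2, ← Complex.exp_add]
      congr 1
      rw [b2]
      push_cast
      field_simp [ha0 ε hε]
      ring
    have hdec := theta_decomp (hb2re ε hε) (show 0 < 2 by norm_num) (c2 k) (c2_per k)
      (fun n => le_of_eq (c2_norm k n))
    rw [Fg, hPo, tsum_congr htrans, hdec]
    simp only [Tg]
    rw [← hconst ε hε]
    ring
  -- conclusion
  rw [show (1+Complex.I) * (1 + (-Complex.I)^k) / (2 * (Real.sqrt k : ℂ))
      = ((1+Complex.I) / (2 * (Real.sqrt k : ℂ))) * ∑ r ∈ Finset.range 2, c2 k (r:ℤ) * 1 by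
    rw [Finset.sum_range_succ, Finset.sum_range_one]
    push_cast
    rw [c2_zero, c2_one]
    ring]
  apply Filter.Tendsto.congr' (Filter.EventuallyEq.symm heq)
  exact Filter.Tendsto.const_mul _
    (tendsto_finset_sum _ (fun r _ => Filter.Tendsto.const_mul _ (hT r)))

lemma gauss_eval (k : ℕ) (hk : 0 < k) :
    ∑ r ∈ Finset.range k, Complex.exp (2*π*Complex.I*(r:ℂ)^2/(k:ℂ))
      = (Real.sqrt k : ℂ) * (1+Complex.I) * (1+(-Complex.I)^k) / 2 := by
  have hk0 : (k:ℂ) ≠ 0 := Nat.cast_ne_zero.mpr hk.ne'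
  have huniq := tendsto_nhds_unique (claim1 k hk) (claim2 k hk)
  have hcg : ∀ r : ℕ, cg k (r:ℤ) = Complex.exp (2*π*Complex.I*(r:ℂ)^2/(k:ℂ)) := by
    intro r
    rw [cg]
    congr 1
    push_cast
    ring
  rw [Finset.sum_congr rfl (fun r _ => (hcg r).symm)]
  have hsk : ((Real.sqrt k : ℝ) : ℂ) ≠ 0 := by
    simp only [ne_eq, Complex.ofReal_eq_zero]
    positivity
  have hkk : ((k:ℝ) : ℂ) = ((Real.sqrt k : ℝ) : ℂ) * ((Real.sqrt k : ℝ) : ℂ) := by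
    rw [← Complex.ofReal_mul, Real.mul_self_sqrt (Nat.cast_nonneg k)]
  have h2 : (∑ r ∈ Finset.range k, cg k (r:ℤ))
      = (k:ℂ) * ((1+Complex.I) * (1 + (-Complex.I)^k) / (2 * (Real.sqrt k : ℂ))) := by
    rw [← huniq]
    field_simp
  rw [h2, show ((k:ℕ):ℂ) = (((k:ℝ)):ℂ) by push_cast; ring, hkk]
  field_simp

theorem extended_classical_gauss_sine_sum (k p : ℕ) (hk : 0 < k) (hp : 0 < p) :
    ∑ n ∈ Finset.Icc 1 (p * k), Real.sin (2 * π * (n : ℝ) ^ 2 / k) =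
      ((p : ℝ) / 2) * Real.sqrt (k : ℝ) *
        (1 + Real.cos ((k : ℝ) * π / 2) - Real.sin ((k : ℝ) * π / 2)) := by
  rw [sum_period k p hk, im_extract k hk (gauss_eval k hk)]
  ring
end
end

section
/- For all positive integers k and p, the generalized odd-indexed quadratic Gauss sum satisfies ∑_{n=1}^{pk} exp(i π (2n-1)² / (4k)) = (1 + i) * p * √(2k) * (1 - (-1)^k) / 4, where the sum is taken in the complex numbers. -/
open Finset Real Complex

open Filter

noncomputable section GaussSumAux




lemma gs_sq_eq {z w : ℂ} (h : z^2 = w^2) (hz : 0 < z.re) (hw : 0 < w.re) : z = w := by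
  have h2 : (z - w) * (z + w) = 0 := by ring_nf; rw [sub_eq_zero]; linear_combination h
  rcases mul_eq_zero.1 h2 with h3 | h3
  · exact sub_eq_zero.1 h3
  · exfalso
    have : (z + w).re > 0 := by simp [Complex.add_re]; linarith
    rw [h3] at this; simp at this

lemma gs_cpow_half_sq {z : ℂ} (hz : z ≠ 0) : (z ^ (1/2 : ℂ))^2 = z := by
  rw [sq, ← Complex.cpow_add _ _ hz]
  norm_num

lemma gs_re_cpow_half_pos {z : ℂ} (hz : 0 < z.re) : 0 < (z ^ (1/2 : ℂ)).re := by
  have hz0 : z ≠ 0 := by intro h; rw [h] at hz; simp at hz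
  rw [Complex.cpow_def_of_ne_zero hz0, Complex.exp_re]
  have harg : |z.arg| < π / 2 := by
    rw [Complex.abs_arg_lt_pi_div_two_iff]; left; exact hz
  have him : (Complex.log z * (1/2)).im = z.arg / 2 := by
    simp [Complex.mul_im, Complex.log_im]; ring
  rw [him]
  have : Real.cos (z.arg / 2) > 0 := by
    apply Real.cos_pos_of_mem_Ioo
    constructor
    · cases' abs_lt.1 harg with h1 h2; linarith
    · cases' abs_lt.1 harg with h1 h2; linarith
  positivity

lemma gs_imsq_lt_resq {z : ℂ} (hz : 0 < z.re) : ((z ^ (1/2:ℂ)).im)^2 < ((z ^ (1/2:ℂ)).re)^2 := by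
  have hz0 : z ≠ 0 := by intro h; rw [h] at hz; simp at hz
  have h := gs_cpow_half_sq hz0
  have hre : ((z ^ (1/2:ℂ))^2).re = (z ^ (1/2:ℂ)).re^2 - (z ^ (1/2:ℂ)).im^2 := by
    rw [sq]; simp [Complex.mul_re]; ring
  rw [h] at hre
  nlinarith [hz]

lemma gs_re_mul_pos {x y : ℂ} (hx1 : 0 < x.re) (hx2 : x.im^2 < x.re^2)
    (hy1 : 0 < y.re) (hy2 : y.im^2 < y.re^2) : 0 < (x * y).re := by
  rw [Complex.mul_re]
  have h1 : x.im^2 * y.im^2 < x.re^2 * y.re^2 :=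
    mul_lt_mul'' hx2 hy2 (sq_nonneg _) (sq_nonneg _)
  nlinarith [mul_pos hx1 hy1]

-- rearranged Poisson
lemma gs_poisson {α : ℂ} (hα : 0 < α.re) (β : ℂ) :
    ∑' n : ℤ, Complex.exp (-π * α * ((n:ℂ) + β)^2) =
      (α⁻¹) ^ (1/2 : ℂ) * ∑' n : ℤ, Complex.exp (-π * α⁻¹ * (n:ℂ)^2 - 2 * π * Complex.I * β * n) := by
  have hα0 : α ≠ 0 := by intro h; rw [h] at hα; simp at hα
  have hαi : 0 < (α⁻¹).re := by
    rw [Complex.inv_re]; exact div_pos hα (Complex.normSq_pos.2 hα0)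
  have h := Complex.tsum_exp_neg_quadratic hαi (-Complex.I * β)
  have hIβ : Complex.I * (-Complex.I * β) = β := by
    rw [show -Complex.I*β = -(Complex.I*β) by ring, mul_neg, ← mul_assoc, Complex.I_mul_I]; ring
  have h1 : ∀ n : ℤ, -π / α⁻¹ * ((n:ℂ) + Complex.I * (-Complex.I * β))^2 = -π * α * ((n:ℂ) + β)^2 := by
    intro n
    rw [hIβ, div_eq_mul_inv, inv_inv]
  have h2 : ∀ n : ℤ, -π * α⁻¹ * (n:ℂ)^2 + 2*π*(-Complex.I*β)*(n:ℂ) =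
      -π * α⁻¹ * (n:ℂ)^2 - 2*π*Complex.I*β*(n:ℂ) := by intro n; ring
  simp_rw [h1, h2] at h
  have hne : α⁻¹ ^ (1/2 : ℂ) ≠ 0 := by
    simp [Complex.cpow_eq_zero_iff, inv_ne_zero hα0]
  rw [h, ← mul_assoc, mul_one_div, div_self hne, one_mul]




noncomputable def gsC : ℝ := ∑' n : ℤ, rexp (-π * (n:ℝ)^2 / 2)

lemma gsC_summable : Summable (fun n : ℤ => rexp (-π * (n:ℝ)^2 / 2)) := by
  have h := summable_pow_mul_jacobiTheta₂_term_bound 0 (by norm_num : (0:ℝ) < 1/2) 0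
  apply h.congr
  intro n
  simp only [pow_zero, one_mul, mul_zero, zero_mul, sub_zero]
  congr 1
  ring

lemma gs_maj_summable {s : ℝ} (hs : 1 ≤ s) :
    Summable (fun n : ℤ => rexp (-π * (n:ℝ)^2 * s)) := by
  have h := summable_pow_mul_jacobiTheta₂_term_bound 0 (lt_of_lt_of_le zero_lt_one hs) 0
  apply h.congr
  intro n
  simp only [pow_zero, one_mul, mul_zero, zero_mul, sub_zero]
  congr 1
  ring

lemma gs_tail_bound (f : ℤ → ℂ) (s : ℝ) (hs : 1 ≤ s) (h0 : f 0 = 1)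
    (hf : ∀ n : ℤ, ‖f n‖ ≤ rexp (-π * (n:ℝ)^2 * s)) :
    ‖(∑' n : ℤ, f n) - 1‖ ≤ rexp (-π * s / 2) * gsC := by
  have hsum : Summable f := Summable.of_norm_bounded (gs_maj_summable hs) hf
  have hmaj : ∀ n : ℤ, n ≠ 0 → rexp (-π * (n:ℝ)^2 * s) ≤ rexp (-π*s/2) * rexp (-π*(n:ℝ)^2/2) := by
    intro n hn
    rw [← Real.exp_add]
    apply Real.exp_le_exp.2
    have h1 : (1:ℝ) ≤ (n:ℝ)^2 := by
      have h2 := Int.one_le_abs hn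
      have h3 : (1:ℤ) ≤ n^2 := by nlinarith [_root_.sq_abs n, abs_nonneg n]
      exact_mod_cast h3
    nlinarith [Real.pi_pos, mul_nonneg (sub_nonneg.2 h1) (sub_nonneg.2 hs)]
  set F : ℤ → ℂ := fun n => if n = 0 then 0 else f n with hF
  have hFb : ∀ n : ℤ, ‖F n‖ ≤ rexp (-π*s/2) * rexp (-π*(n:ℝ)^2/2) := by
    intro n
    by_cases h : n = 0
    · simp [hF, h]; positivity
    · simp only [hF, if_neg h]
      exact le_trans (hf n) (hmaj n h)
  have hFsum : Summable (fun n => ‖F n‖) :=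
    Summable.of_nonneg_of_le (fun n => norm_nonneg _) hFb (gsC_summable.mul_left _)
  have key : (∑' n : ℤ, f n) = 1 + ∑' n : ℤ, F n := by
    rw [hsum.tsum_eq_add_tsum_ite 0, h0]
  rw [key, add_sub_cancel_left]
  calc ‖∑' n : ℤ, F n‖ ≤ ∑' n : ℤ, ‖F n‖ := norm_tsum_le_tsum_norm hFsum
    _ ≤ ∑' n : ℤ, rexp (-π*s/2) * rexp (-π*(n:ℝ)^2/2) :=
        Summable.tsum_le_tsum hFb hFsum (gsC_summable.mul_left _)
    _ = rexp (-π*s/2) * gsC := by rw [tsum_mul_left]; rfl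




-- splitting one Gaussian term along cosets, k odd
lemma gs_term_split {k : ℕ} (hk : Odd k) (h0 : 0 < k) (t : ℝ) (q : ℤ) (r : ℕ) :
    Complex.exp (-π * ((t:ℂ) - Complex.I/(k:ℂ)) * (((q:ℂ)*(k:ℂ) + (r:ℂ)) + 1/2)^2)
      = Complex.exp (π * Complex.I * (2*(r:ℂ)+1)^2 / (4*(k:ℂ))) *
        Complex.exp (-π * ((t*(k:ℝ)^2 : ℝ):ℂ) * ((q:ℂ) + ((r:ℂ)+1/2)/(k:ℂ))^2) := by
  have hK : (k:ℂ) ≠ 0 := Nat.cast_ne_zero.2 h0.ne'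
  have hev : Even (q * ((k:ℤ)*q + 2*(r:ℤ) + 1)) := by
    rcases Int.even_or_odd q with hq | hq
    · exact hq.mul_right _
    · apply Even.mul_left
      rcases hk with ⟨c, hc⟩
      rcases hq with ⟨d, hd⟩
      refine ⟨(c+c+1)*d + c + r + 1, ?_⟩
      subst hc hd; push_cast; ring
  obtain ⟨m, hm⟩ := hev
  have hm' : (q:ℂ) * ((k:ℂ)*(q:ℂ) + 2*(r:ℂ) + 1) = 2*(m:ℂ) := by
    have h := congrArg (fun z : ℤ => (z : ℂ)) hm
    push_cast at h; linear_combination h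
  rw [← Complex.exp_add]
  have hexp : -π * ((t:ℂ) - Complex.I/(k:ℂ)) * (((q:ℂ)*(k:ℂ) + (r:ℂ)) + 1/2)^2
      = π * Complex.I * (2*(r:ℂ)+1)^2 / (4*(k:ℂ)) +
        -π * ((t*(k:ℝ)^2 : ℝ):ℂ) * ((q:ℂ) + ((r:ℂ)+1/2)/(k:ℂ))^2 + (m:ℂ) * (2*π*Complex.I) := by
    push_cast
    field_simp
    linear_combination (16*Complex.I*(k:ℂ)) * hm'
  rw [hexp, Complex.exp_add, Complex.exp_int_mul_two_pi_mul_I, mul_one]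

-- absorbing the linear phase, k odd
lemma gs_lin_absorb {k : ℕ} (hk : Odd k) (v : ℂ) (n : ℤ) :
    Complex.exp (-π * v * (n:ℂ)^2 - 2*π*Complex.I*(1/2:ℂ)*(n:ℂ))
      = Complex.exp (-π * (v - Complex.I*(k:ℂ)) * (n:ℂ)^2) := by
  have hev : Even ((k:ℤ)*n^2 + n) := by
    rcases Int.even_or_odd n with hn | hn
    · have h2 : Even ((n:ℤ)^2) := Int.even_pow.2 ⟨hn, by norm_num⟩
      exact (h2.mul_left _).add hn
    · rcases hk with ⟨c, hc⟩
      rcases hn with ⟨d, hd⟩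
      refine ⟨(c+c+1)*(2*d^2+2*d)+d + c + 1, ?_⟩
      subst hc hd; push_cast; ring
  obtain ⟨m, hm⟩ := hev
  have hm' : (k:ℂ)*(n:ℂ)^2 + (n:ℂ) = 2*(m:ℂ) := by
    have h := congrArg (fun z : ℤ => (z : ℂ)) hm
    push_cast at h; linear_combination h
  have hexp : -π * v * (n:ℂ)^2 - 2*π*Complex.I*(1/2:ℂ)*(n:ℂ)
      = -π * (v - Complex.I*(k:ℂ)) * (n:ℂ)^2 + (-m:ℤ) * (2*π*Complex.I) := by
    push_cast
    linear_combination (-(π:ℂ)*Complex.I) * hm'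
  rw [hexp, Complex.exp_add, Complex.exp_int_mul_two_pi_mul_I, mul_one]





lemma gs_ident (k : ℕ) (hk : Odd k) (h0 : 0 < k) (t : ℝ) (ht : 0 < t) :
    ∑ r ∈ Finset.range k, Complex.exp (π * Complex.I * (2*(r:ℂ)+1)^2 / (4*(k:ℂ))) *
        (∑' m : ℤ, Complex.exp (-π * ((t*(k:ℝ)^2 : ℝ):ℂ)⁻¹ * (m:ℂ)^2
            - 2*π*Complex.I*(((r:ℂ)+1/2)/(k:ℂ))*(m:ℂ)))
      = (1 + Complex.I) * (Real.sqrt (2*(k:ℝ)) : ℂ) / 2 *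
        (∑' n : ℤ, Complex.exp (-π * ((((k:ℝ)^2*t)⁻¹ : ℝ):ℂ)*(n:ℂ)^2
            - π * (((k:ℝ)⁻¹ : ℝ):ℂ)*Complex.I*(n:ℂ)^2)) := by
  have hkR : (0:ℝ) < (k:ℝ) := Nat.cast_pos.2 h0
  have hK : (k:ℂ) ≠ 0 := Nat.cast_ne_zero.2 h0.ne'
  haveI : NeZero k := ⟨h0.ne'⟩
  set a : ℂ := (t:ℂ) - Complex.I/(k:ℂ) with ha_def
  have ha_re : a.re = t := by
    simp [ha_def, Complex.div_re]
  have ha_pos : 0 < a.re := by rw [ha_re]; exact ht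
  have ha0 : a ≠ 0 := fun h => by rw [h] at ha_pos; simp at ha_pos
  have hainv : 0 < (a⁻¹).re := by
    rw [Complex.inv_re]; exact div_pos ha_pos (Complex.normSq_pos.2 ha0)
  set δ : ℂ := a⁻¹ - Complex.I*(k:ℂ) with hδ_def
  have hδ_re : δ.re = (a⁻¹).re := by
    simp [hδ_def]
  have hδ_pos : 0 < δ.re := by rw [hδ_re]; exact hainv
  have hδ0 : δ ≠ 0 := fun h => by rw [h] at hδ_pos; simp at hδ_pos
  have ht0 : (t:ℂ) ≠ 0 := Complex.ofReal_ne_zero.2 ht.ne'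
  have hcast : ((t*(k:ℝ)^2 : ℝ):ℂ) = (t:ℂ)*(k:ℂ)^2 := by push_cast; ring
  have haδ : a * δ = -Complex.I * (k:ℂ) * (t:ℂ) := by
    rw [hδ_def, mul_sub, mul_inv_cancel₀ ha0, ha_def]
    field_simp
    linear_combination Complex.I_sq
  set w : ℂ := ((((k:ℝ)^2*t)⁻¹ : ℝ):ℂ) + (((k:ℝ)⁻¹ : ℝ):ℂ)*Complex.I with hw_def
  have hδinv : δ⁻¹ = w := by
    have h1 : δ * w = 1 := by
      have h2 : (a * δ) * w = a := by
        rw [haδ, hw_def, ha_def]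
        push_cast
        field_simp
        linear_combination (-(k:ℂ)*(t:ℂ)) * Complex.I_sq
      have h3 : a * (δ * w) = a * 1 := by rw [← mul_assoc, h2, mul_one]
      exact mul_left_cancel₀ ha0 h3
    exact inv_eq_of_mul_eq_one_right h1
  have hwre : 0 < w.re := by
    have hre : w.re = ((k:ℝ)^2*t)⁻¹ := by
      rw [hw_def, Complex.add_re, Complex.ofReal_re, Complex.mul_I_re, Complex.ofReal_im,
        neg_zero, add_zero]
    rw [hre]; positivity
  -- names
  set G : ℂ := (1 + Complex.I) * (Real.sqrt (2*(k:ℝ)) : ℂ) / 2 with hG_def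
  set x : ℂ := (a⁻¹) ^ (1/2:ℂ) with hx_def
  set y : ℂ := (δ⁻¹) ^ (1/2:ℂ) with hy_def
  set z0 : ℂ := (((t*(k:ℝ)^2 : ℝ):ℂ)⁻¹) ^ (1/2:ℂ) with hz0_def
  have htk : (0:ℝ) < t*(k:ℝ)^2 := by positivity
  have htkC : ((t*(k:ℝ)^2 : ℝ):ℂ) ≠ 0 := Complex.ofReal_ne_zero.2 htk.ne'
  have htkre : 0 < (((t*(k:ℝ)^2 : ℝ):ℂ)⁻¹).re := by
    rw [← Complex.ofReal_inv, Complex.ofReal_re]; positivity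
  have hδire : 0 < (δ⁻¹).re := by rw [hδinv]; exact hwre
  -- z0 is a positive real
  have hζpos : (0:ℝ) < ((t*(k:ℝ)^2)⁻¹) ^ (1/2:ℝ) := Real.rpow_pos_of_pos (by positivity) _
  have hz0R : z0 = ((((t*(k:ℝ)^2)⁻¹ ^ (1/2:ℝ) : ℝ)):ℂ) := by
    rw [hz0_def, ← Complex.ofReal_inv]
    rw [show (1/2:ℂ) = ((1/2:ℝ):ℂ) by norm_num]
    rw [← Complex.ofReal_cpow (by positivity)]
  have hz0ne : z0 ≠ 0 := by rw [hz0R]; exact_mod_cast hζpos.ne'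
  -- G facts
  have h2k : Real.sqrt (2*(k:ℝ))^2 = 2*(k:ℝ) := Real.sq_sqrt (by positivity)
  have hs2 : ((Real.sqrt (2*(k:ℝ)) : ℝ):ℂ)^2 = 2*(k:ℂ) := by
    rw [← Complex.ofReal_pow, h2k]; push_cast; ring
  have hG2 : G^2 = Complex.I*(k:ℂ) := by
    rw [hG_def]
    linear_combination ((1+Complex.I)^2/4) * hs2 + ((k:ℂ)/2) * Complex.I_sq
  have hGre : G.re = Real.sqrt (2*(k:ℝ))/2 := by
    rw [hG_def]
    simp [Complex.div_re, Complex.add_re, Complex.mul_re]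
  -- x*y = z0*G
  have hsq : (x*y)^2 = (z0*G)^2 := by
    rw [mul_pow, mul_pow, hx_def, hy_def, hz0_def,
      gs_cpow_half_sq (inv_ne_zero ha0), gs_cpow_half_sq (inv_ne_zero hδ0),
      gs_cpow_half_sq (inv_ne_zero htkC), hG2, ← mul_inv, haδ]
    have hmul : (-Complex.I*(k:ℂ)*(t:ℂ)) * (((t*(k:ℝ)^2 : ℝ):ℂ)⁻¹ * (Complex.I*(k:ℂ))) = 1 := by
      rw [hcast]
      field_simp
      linear_combination (-1:ℂ) * Complex.I_sq
    rw [inv_eq_of_mul_eq_one_right hmul]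
  have hxyre : 0 < (x*y).re :=
    gs_re_mul_pos (gs_re_cpow_half_pos hainv) (gs_imsq_lt_resq hainv)
      (gs_re_cpow_half_pos hδire) (gs_imsq_lt_resq hδire)
  have hzGre : 0 < (z0*G).re := by
    rw [hz0R, Complex.re_ofReal_mul, hGre]
    have := Real.sqrt_pos.2 (show (0:ℝ) < 2*(k:ℝ) by positivity)
    positivity
  have hxy : x * y = z0 * G := gs_sq_eq hsq hxyre hzGre
  -- summability of the master series
  set g : ℤ → ℂ := fun n => Complex.exp (-π * a * ((n:ℂ) + 1/2)^2) with hg_def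
  have hsumg : Summable g := by
    have him : 0 < (Complex.I * a).im := by
      have : (Complex.I * a).im = a.re := by simp [Complex.mul_im]
      rw [this, ha_re]; exact ht
    have hsum := ((summable_jacobiTheta₂_term_iff (Complex.I*a/2) (Complex.I*a)).2 him).mul_left
      (Complex.exp (-π * a/4))
    apply hsum.congr
    intro n
    rw [jacobiTheta₂_term, ← Complex.exp_add, hg_def]
    congr 1
    linear_combination ((π:ℂ)*a*(n:ℂ) + (π:ℂ)*a*(n:ℂ)^2) * Complex.I_sq
  -- step 2 : the whole sum via two Poisson steps
  have step2 : ∑' n : ℤ, g n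
      = x * (y * ∑' n : ℤ, Complex.exp (-π * ((((k:ℝ)^2*t)⁻¹ : ℝ):ℂ)*(n:ℂ)^2
            - π * (((k:ℝ)⁻¹ : ℝ):ℂ)*Complex.I*(n:ℂ)^2)) := by
    have hP1 := gs_poisson ha_pos (1/2 : ℂ)
    have hinner : ∑' n : ℤ, Complex.exp (-π * a⁻¹ * (n:ℂ)^2 - 2*π*Complex.I*(1/2:ℂ)*(n:ℂ))
        = ∑' n : ℤ, Complex.exp (-π * δ * (n:ℂ)^2) := by
      refine tsum_congr fun n => ?_
      rw [hδ_def]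
      exact gs_lin_absorb hk a⁻¹ n
    have hP2 := gs_poisson hδ_pos (0 : ℂ)
    have hP2' : ∑' n : ℤ, Complex.exp (-π * δ * (n:ℂ)^2)
        = y * ∑' n : ℤ, Complex.exp (-π * ((((k:ℝ)^2*t)⁻¹ : ℝ):ℂ)*(n:ℂ)^2
            - π * (((k:ℝ)⁻¹ : ℝ):ℂ)*Complex.I*(n:ℂ)^2) := by
      rw [show (∑' n : ℤ, Complex.exp (-π * δ * (n:ℂ)^2))
          = ∑' n : ℤ, Complex.exp (-π * δ * ((n:ℂ)+0)^2) by
        exact tsum_congr fun n => by rw [add_zero], hP2, hy_def]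
      congr 1
      refine tsum_congr fun n => ?_
      rw [hδinv, hw_def]
      congr 1
      ring
    rw [hg_def, hP1, hinner, hP2', hx_def]
  -- step 1 : coset decomposition
  have step1 : ∑' n : ℤ, g n
      = ∑ r ∈ Finset.range k, Complex.exp (π * Complex.I * (2*(r:ℂ)+1)^2 / (4*(k:ℂ))) *
        (z0 * (∑' m : ℤ, Complex.exp (-π * ((t*(k:ℝ)^2 : ℝ):ℂ)⁻¹ * (m:ℂ)^2
            - 2*π*Complex.I*(((r:ℂ)+1/2)/(k:ℂ))*(m:ℂ)))) := by
    set e : Fin k × ℤ ≃ ℤ := (Equiv.prodComm (Fin k) ℤ).trans (Int.divModEquiv k).symm with he_def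
    have he_app : ∀ p : Fin k × ℤ, (e p : ℤ) = p.2 * k + (p.1 : ℤ) := by
      intro p; simp [he_def, Int.divModEquiv]
    have hge : Summable (g ∘ e) := e.summable_iff.2 hsumg
    have h1 : ∑' n : ℤ, g n = ∑' p : Fin k × ℤ, g (e p) := (e.tsum_eq g).symm
    have h2 : ∑' p : Fin k × ℤ, g (e p) = ∑' r : Fin k, ∑' q : ℤ, g (e (r, q)) :=
      Summable.tsum_prod' hge fun b => hge.prod_factor b
    have h3 : ∑' r : Fin k, ∑' q : ℤ, g (e (r, q)) = ∑ r : Fin k, ∑' q : ℤ, g (e (r, q)) :=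
      tsum_fintype _
    rw [h1, h2, h3]
    have h4 : (∑ r : Fin k, ∑' q : ℤ, g (e (r, q)))
        = ∑ r : Fin k, (fun (r' : ℕ) => ∑' q : ℤ, g (q * k + r')) (r : ℕ) :=
      Finset.sum_congr rfl fun r _ => tsum_congr fun q => by
        rw [he_app (r, q)]
    rw [h4, Fin.sum_univ_eq_sum_range (fun (r' : ℕ) => ∑' q : ℤ, g (q * (k:ℤ) + (r':ℤ))) k]
    refine Finset.sum_congr rfl fun r hr => ?_
    have hterm : ∀ q : ℤ, g (q * k + r)
        = Complex.exp (π * Complex.I * (2*(r:ℂ)+1)^2 / (4*(k:ℂ))) *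
          Complex.exp (-π * ((t*(k:ℝ)^2 : ℝ):ℂ) * ((q:ℂ) + ((r:ℂ)+1/2)/(k:ℂ))^2) := by
      intro q
      rw [hg_def]
      have hc : ((q * k + r : ℤ):ℂ) = (q:ℂ)*(k:ℂ) + (r:ℂ) := by push_cast; ring
      simp only [hc]
      exact gs_term_split hk h0 t q r
    rw [tsum_congr hterm, tsum_mul_left]
    congr 1
    have hre2 : 0 < ((t*(k:ℝ)^2 : ℝ):ℂ).re := by rw [Complex.ofReal_re]; exact htk
    have := gs_poisson hre2 (((r:ℂ)+1/2)/(k:ℂ))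
    rw [this, hz0_def]
  -- conclude
  have hz0sum : z0 * (∑ r ∈ Finset.range k, Complex.exp (π * Complex.I * (2*(r:ℂ)+1)^2 / (4*(k:ℂ))) *
      (∑' m : ℤ, Complex.exp (-π * ((t*(k:ℝ)^2 : ℝ):ℂ)⁻¹ * (m:ℂ)^2
          - 2*π*Complex.I*(((r:ℂ)+1/2)/(k:ℂ))*(m:ℂ))))
      = z0 * (G * ∑' n : ℤ, Complex.exp (-π * ((((k:ℝ)^2*t)⁻¹ : ℝ):ℂ)*(n:ℂ)^2
            - π * (((k:ℝ)⁻¹ : ℝ):ℂ)*Complex.I*(n:ℂ)^2)) := by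
    rw [Finset.mul_sum]
    rw [show ∀ (F : ℕ → ℂ) (W : ℕ → ℂ), (∑ r ∈ Finset.range k, z0 * (F r * W r))
        = ∑ r ∈ Finset.range k, F r * (z0 * W r) from
      fun F W => Finset.sum_congr rfl fun r _ => by ring]
    rw [← step1, step2, ← mul_assoc, hxy, mul_assoc]
  exact mul_left_cancel₀ hz0ne hz0sum






lemma gs_norm_exp (A B : ℝ) : ‖Complex.exp ((A:ℂ) + (B:ℂ)*Complex.I)‖ = rexp A := by
  rw [Complex.norm_exp]
  congr 1
  simp [Complex.add_re, Complex.mul_I_re]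

lemma gs_theta_lim (k : ℕ) (h0 : 0 < k) (F : ℝ → ℤ → ℂ)
    (hnorm : ∀ t : ℝ, 0 < t → ∀ n : ℤ, ‖F t n‖ = rexp (-π * (n:ℝ)^2 * ((k:ℝ)^2*t)⁻¹))
    (hF0 : ∀ t : ℝ, 0 < t → F t 0 = 1) :
    Tendsto (fun t => ∑' n : ℤ, F t n) (nhdsWithin 0 (Set.Ioi 0)) (nhds 1) := by
  have hkR : (0:ℝ) < (k:ℝ) := Nat.cast_pos.2 h0
  have hbound : ∀ᶠ t in nhdsWithin (0:ℝ) (Set.Ioi 0),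
      ‖(∑' n : ℤ, F t n) - 1‖ ≤ rexp (-π * ((k:ℝ)^2*t)⁻¹ / 2) * gsC := by
    have hmem : Set.Ioo (0:ℝ) ((k:ℝ)^2)⁻¹ ∈ nhdsWithin (0:ℝ) (Set.Ioi 0) :=
      Ioo_mem_nhdsGT_of_mem ⟨le_refl _, by positivity⟩
    filter_upwards [hmem] with t htt
    have ht : 0 < t := htt.1
    have h6 : (k:ℝ)^2*t ≤ 1 := by
      have h7 := mul_lt_mul_of_pos_right htt.2 (show (0:ℝ) < (k:ℝ)^2 by positivity)
      rw [inv_mul_cancel₀ (by positivity : ((k:ℝ)^2) ≠ 0)] at h7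
      nlinarith
    have hs : 1 ≤ ((k:ℝ)^2*t)⁻¹ := (one_le_inv₀ (by positivity)).2 h6
    exact gs_tail_bound (F t) _ hs (hF0 t ht) (fun n => le_of_eq (hnorm t ht n))
  have hlim0 : Tendsto (fun t : ℝ => rexp (-π * ((k:ℝ)^2*t)⁻¹ / 2) * gsC)
      (nhdsWithin 0 (Set.Ioi 0)) (nhds 0) := by
    have h1 : Tendsto (fun t : ℝ => ((k:ℝ)^2*t)⁻¹) (nhdsWithin 0 (Set.Ioi 0)) atTop := by
      have h2 : Tendsto (fun t : ℝ => t⁻¹) (nhdsWithin 0 (Set.Ioi 0)) atTop :=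
        tendsto_inv_nhdsGT_zero
      have h3 : Tendsto (fun t : ℝ => ((k:ℝ)^2)⁻¹ * t⁻¹) (nhdsWithin 0 (Set.Ioi 0)) atTop :=
        h2.const_mul_atTop (by positivity)
      refine h3.congr fun t => ?_
      rw [mul_inv]
    have h4 : Tendsto (fun t : ℝ => -π * ((k:ℝ)^2*t)⁻¹ / 2) (nhdsWithin 0 (Set.Ioi 0)) atBot := by
      have h5 : Tendsto (fun s : ℝ => s * (-π/2)) atTop atBot :=
        Tendsto.atTop_mul_const_of_neg (by linarith [Real.pi_pos]) tendsto_id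
      have h6 := h5.comp h1
      refine h6.congr fun s => ?_
      simp only [Function.comp]
      ring
    have hexp0 : Tendsto (fun t : ℝ => rexp (-π * ((k:ℝ)^2*t)⁻¹ / 2))
        (nhdsWithin 0 (Set.Ioi 0)) (nhds 0) := Real.tendsto_exp_atBot.comp h4
    have := hexp0.mul_const gsC
    rwa [zero_mul] at this
  have hsub : Tendsto (fun t => (∑' n : ℤ, F t n) - 1) (nhdsWithin 0 (Set.Ioi 0)) (nhds 0) :=
    squeeze_zero_norm' hbound hlim0
  have := hsub.add_const 1
  simpa using this




lemma gs_core (k : ℕ) (hk : Odd k) (h0 : 0 < k) :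
    ∑ r ∈ Finset.range k, Complex.exp (π * Complex.I * (2*(r:ℂ)+1)^2 / (4*(k:ℂ)))
      = (1 + Complex.I) * (Real.sqrt (2*(k:ℝ)) : ℂ) / 2 := by
  have hkR : (0:ℝ) < (k:ℝ) := Nat.cast_pos.2 h0
  -- limits of the row theta functions
  have hΘr : ∀ r : ℕ, Tendsto (fun t : ℝ => ∑' m : ℤ,
      Complex.exp (-π * ((t*(k:ℝ)^2 : ℝ):ℂ)⁻¹ * (m:ℂ)^2
        - 2*π*Complex.I*(((r:ℂ)+1/2)/(k:ℂ))*(m:ℂ)))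
      (nhdsWithin 0 (Set.Ioi 0)) (nhds 1) := by
    intro r
    apply gs_theta_lim k h0
    · intro t ht n
      have harg : (-π * ((t*(k:ℝ)^2 : ℝ):ℂ)⁻¹ * (n:ℂ)^2
          - 2*π*Complex.I*(((r:ℂ)+1/2)/(k:ℂ))*(n:ℂ))
          = ((-π * (t*(k:ℝ)^2)⁻¹ * (n:ℝ)^2 : ℝ):ℂ)
            + ((-2*π*(((r:ℝ)+1/2)/(k:ℝ))*(n:ℝ) : ℝ):ℂ) * Complex.I := by
        push_cast
        ring
      rw [harg, gs_norm_exp]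
      congr 1
      ring
    · intro t ht
      norm_num
  have hΘ' : Tendsto (fun t : ℝ => ∑' n : ℤ,
      Complex.exp (-π * ((((k:ℝ)^2*t)⁻¹ : ℝ):ℂ)*(n:ℂ)^2 - π * (((k:ℝ)⁻¹ : ℝ):ℂ)*Complex.I*(n:ℂ)^2))
      (nhdsWithin 0 (Set.Ioi 0)) (nhds 1) := by
    apply gs_theta_lim k h0
    · intro t ht n
      have harg : (-π * ((((k:ℝ)^2*t)⁻¹ : ℝ):ℂ)*(n:ℂ)^2 - π * (((k:ℝ)⁻¹ : ℝ):ℂ)*Complex.I*(n:ℂ)^2)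
          = ((-π * ((k:ℝ)^2*t)⁻¹ * (n:ℝ)^2 : ℝ):ℂ)
            + ((-π*((k:ℝ)⁻¹)*(n:ℝ)^2 : ℝ):ℂ) * Complex.I := by
        push_cast
        ring
      rw [harg, gs_norm_exp]
      congr 1
      ring
    · intro t ht
      norm_num
  have hL : Tendsto (fun t : ℝ => ∑ r ∈ Finset.range k,
      Complex.exp (π * Complex.I * (2*(r:ℂ)+1)^2 / (4*(k:ℂ))) *
      (∑' m : ℤ, Complex.exp (-π * ((t*(k:ℝ)^2 : ℝ):ℂ)⁻¹ * (m:ℂ)^2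
          - 2*π*Complex.I*(((r:ℂ)+1/2)/(k:ℂ))*(m:ℂ))))
      (nhdsWithin 0 (Set.Ioi 0))
      (nhds (∑ r ∈ Finset.range k, Complex.exp (π * Complex.I * (2*(r:ℂ)+1)^2 / (4*(k:ℂ))) * 1)) :=
    tendsto_finset_sum _ (fun r _ => (hΘr r).const_mul _)
  have hR : Tendsto (fun t : ℝ => (1 + Complex.I) * (Real.sqrt (2*(k:ℝ)) : ℂ) / 2 *
      (∑' n : ℤ, Complex.exp (-π * ((((k:ℝ)^2*t)⁻¹ : ℝ):ℂ)*(n:ℂ)^2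
          - π * (((k:ℝ)⁻¹ : ℝ):ℂ)*Complex.I*(n:ℂ)^2)))
      (nhdsWithin 0 (Set.Ioi 0))
      (nhds ((1 + Complex.I) * (Real.sqrt (2*(k:ℝ)) : ℂ) / 2 * 1)) :=
    hΘ'.const_mul _
  have hev : (fun t : ℝ => ∑ r ∈ Finset.range k,
      Complex.exp (π * Complex.I * (2*(r:ℂ)+1)^2 / (4*(k:ℂ))) *
      (∑' m : ℤ, Complex.exp (-π * ((t*(k:ℝ)^2 : ℝ):ℂ)⁻¹ * (m:ℂ)^2
          - 2*π*Complex.I*(((r:ℂ)+1/2)/(k:ℂ))*(m:ℂ))))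
      =ᶠ[nhdsWithin 0 (Set.Ioi 0)]
      (fun t : ℝ => (1 + Complex.I) * (Real.sqrt (2*(k:ℝ)) : ℂ) / 2 *
      (∑' n : ℤ, Complex.exp (-π * ((((k:ℝ)^2*t)⁻¹ : ℝ):ℂ)*(n:ℂ)^2
          - π * (((k:ℝ)⁻¹ : ℝ):ℂ)*Complex.I*(n:ℂ)^2))) := by
    filter_upwards [self_mem_nhdsWithin] with t ht
    exact gs_ident k hk h0 t ht
  have hL' := hL.congr' hev
  have huniq := tendsto_nhds_unique hL' hR
  simpa using huniq


end GaussSumAux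

section GaussSumMain





theorem generalized_odd_indexed_quadratic_gauss_sum (k p : ℕ) (hk : 0 < k) (hp : 0 < p) :
    ∑ n ∈ Finset.Icc 1 (p * k),
        Complex.exp (Complex.I * (π : ℂ) * (2 * (n : ℂ) - 1) ^ 2 / (4 * (k : ℂ))) =
      (1 + Complex.I) * (p : ℂ) * (Real.sqrt (2 * (k : ℝ)) : ℂ) *
        (1 - (-1 : ℂ) ^ k) / 4 := by
  have hK : (k:ℂ) ≠ 0 := Nat.cast_ne_zero.2 hk.ne'
  rcases Nat.even_or_odd k with hke | hko
  · -- k even : result is zero on both sides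
    have hrhs : (1 - (-1:ℂ)^k) = 0 := by
      rcases hke with ⟨c, hc⟩
      subst hc
      rw [show c + c = 2*c by ring, pow_mul]
      norm_num
    rw [hrhs, mul_zero, zero_div]
    refine Finset.sum_involution
      (fun n _ => (2*((n-1)/k) + 1)*k + 1 - n) ?_ ?_ ?_ ?_
    · -- f n + f (σ n) = 0
      intro n hn
      rw [Finset.mem_Icc] at hn
      obtain ⟨hn1, hn2⟩ := hn
      set q := (n-1)/k with hq_def
      have h1 : q*k ≤ n-1 := by rw [hq_def]; exact Nat.div_mul_le_self _ _
      have h2 : n-1 < q*k + k := by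
        rw [hq_def]
        have h3 := Nat.div_add_mod (n-1) k
        have h4 := Nat.mod_lt (n-1) hk
        have h5 : k * ((n-1)/k) = ((n-1)/k) * k := Nat.mul_comm _ _
        omega
      have hmul : (2*q+1)*k = 2*(q*k) + k := by ring
      rcases hke with ⟨c, hc⟩
      have hodd : Odd ((2*(q:ℤ)+1)^2*(k:ℤ) - (2*(q:ℤ)+1)*(2*(n:ℤ)-1)) := by
        have he : Even ((2*(q:ℤ)+1)^2*(k:ℤ)) := by
          refine Even.mul_left ⟨(c:ℤ), ?_⟩ _
          rw [hc]; push_cast; ring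
        have ho : Odd ((2*(q:ℤ)+1)*(2*(n:ℤ)-1)) := by
          refine Odd.mul ⟨(q:ℤ), by ring⟩ ⟨(n:ℤ)-1, by ring⟩
        exact he.sub_odd ho
      obtain ⟨m, hm⟩ := hodd
      have hm' : (2*(q:ℂ)+1)^2*(k:ℂ) - (2*(q:ℂ)+1)*(2*(n:ℂ)-1) = 2*(m:ℂ)+1 := by
        have h := congrArg (fun z : ℤ => (z : ℂ)) hm
        push_cast at h; linear_combination h
      have hcast : (((2*q+1)*k + 1 - n : ℕ) : ℂ) = (2*(q:ℂ)+1)*(k:ℂ) + 1 - (n:ℂ) := by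
        have hle : n ≤ (2*q+1)*k + 1 := by omega
        push_cast [Nat.cast_sub hle]
        ring
      rw [hcast]
      have hE2 : Complex.I * (π : ℂ) * (2 * ((2*(q:ℂ)+1)*(k:ℂ) + 1 - (n:ℂ)) - 1) ^ 2 / (4 * (k:ℂ))
          = Complex.I * (π : ℂ) * (2 * (n:ℂ) - 1) ^ 2 / (4 * (k:ℂ))
            + ((π:ℂ) * Complex.I + (m:ℂ) * (2*(π:ℂ)*Complex.I)) := by
        field_simp
        linear_combination (4*(k:ℂ)) * hm'
      rw [hE2, Complex.exp_add, Complex.exp_add, Complex.exp_pi_mul_I,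
        Complex.exp_int_mul_two_pi_mul_I]
      ring
    · -- σ n ≠ n
      intro n hn _
      rw [Finset.mem_Icc] at hn
      obtain ⟨hn1, hn2⟩ := hn
      show (2*((n-1)/k) + 1)*k + 1 - n ≠ n
      set q := (n-1)/k with hq_def
      have h1 : q*k ≤ n-1 := by rw [hq_def]; exact Nat.div_mul_le_self _ _
      have h2 : n-1 < q*k + k := by
        rw [hq_def]
        have h3 := Nat.div_add_mod (n-1) k
        have h4 := Nat.mod_lt (n-1) hk
        have h5 : k * ((n-1)/k) = ((n-1)/k) * k := Nat.mul_comm _ _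
        omega
      have hmul : (2*q+1)*k = 2*(q*k) + k := by ring
      rcases hke with ⟨c, hc⟩
      omega
    · -- σ n ∈ Icc 1 (p*k)
      intro n hn
      rw [Finset.mem_Icc] at hn
      obtain ⟨hn1, hn2⟩ := hn
      show (2*((n-1)/k) + 1)*k + 1 - n ∈ Finset.Icc 1 (p*k)
      rw [Finset.mem_Icc]
      set q := (n-1)/k with hq_def
      have h1 : q*k ≤ n-1 := by rw [hq_def]; exact Nat.div_mul_le_self _ _
      have h2 : n-1 < q*k + k := by
        rw [hq_def]
        have h3 := Nat.div_add_mod (n-1) k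
        have h4 := Nat.mod_lt (n-1) hk
        have h5 : k * ((n-1)/k) = ((n-1)/k) * k := Nat.mul_comm _ _
        omega
      have hmul : (2*q+1)*k = 2*(q*k) + k := by ring
      have hqp : q + 1 ≤ p := by
        by_contra hcon
        push_neg at hcon
        have : p*k ≤ q*k := Nat.mul_le_mul_right k (by omega)
        omega
      have hqk : (q+1)*k ≤ p*k := Nat.mul_le_mul_right k hqp
      have hmul2 : (q+1)*k = q*k + k := by ring
      omega
    · -- involution
      intro n hn
      rw [Finset.mem_Icc] at hn
      obtain ⟨hn1, hn2⟩ := hn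
      show (2*(((2*((n-1)/k) + 1)*k + 1 - n - 1)/k) + 1)*k + 1 - ((2*((n-1)/k) + 1)*k + 1 - n) = n
      set q := (n-1)/k with hq_def
      have h1 : q*k ≤ n-1 := by rw [hq_def]; exact Nat.div_mul_le_self _ _
      have h2 : n-1 < q*k + k := by
        rw [hq_def]
        have h3 := Nat.div_add_mod (n-1) k
        have h4 := Nat.mod_lt (n-1) hk
        have h5 : k * ((n-1)/k) = ((n-1)/k) * k := Nat.mul_comm _ _
        omega
      have hmul : (2*q+1)*k = 2*(q*k) + k := by ring
      have hq' : ((2*q+1)*k + 1 - n - 1)/k = q := by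
        apply Nat.div_eq_of_lt_le
        · have : q * k = k * q := Nat.mul_comm _ _
          omega
        · have : (q+1)*k = k*(q+1) := Nat.mul_comm _ _
          have hh : (q+1)*k = q*k + k := by ring
          omega
      simp only [hq']
      omega
  · -- k odd
    have hIcc : ∑ n ∈ Finset.Icc 1 (p*k),
        Complex.exp (Complex.I * (π : ℂ) * (2 * (n : ℂ) - 1) ^ 2 / (4 * (k : ℂ)))
        = ∑ i ∈ Finset.range (p*k),
          Complex.exp (Complex.I * (π : ℂ) * (2 * (i : ℂ) + 1) ^ 2 / (4 * (k : ℂ))) := by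
      rw [← Finset.Ico_add_one_right_eq_Icc, Finset.sum_Ico_eq_sum_range]
      simp only [Nat.add_sub_cancel]
      refine Finset.sum_congr rfl fun i _ => ?_
      congr 1
      push_cast
      ring
    have hper : ∀ P i : ℕ, Complex.exp (Complex.I * (π : ℂ) * (2 * ((P*k+i : ℕ) : ℂ) + 1) ^ 2 / (4 * (k : ℂ)))
        = Complex.exp (Complex.I * (π : ℂ) * (2 * (i : ℂ) + 1) ^ 2 / (4 * (k : ℂ))) := by
      intro P i
      have hev : Even ((P:ℤ)*(2*(i:ℤ)+1) + (P:ℤ)^2*(k:ℤ)) := by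
        rcases Nat.even_or_odd P with hP | hP
        · obtain ⟨c, hc⟩ := hP
          refine ⟨(c:ℤ)*(2*(i:ℤ)+1) + 2*(c:ℤ)^2*(k:ℤ), ?_⟩
          rw [hc]; push_cast; ring
        · obtain ⟨c, hc⟩ := hP
          obtain ⟨d, hd⟩ := hko
          refine ⟨2*(c:ℤ)*(i:ℤ) + 3*c + (i:ℤ) + 4*(c:ℤ)^2*d + 2*(c:ℤ)^2 + 4*(c:ℤ)*d + d + 1, ?_⟩
          rw [hc, hd]; push_cast; ring
      obtain ⟨m, hm⟩ := hev
      have hm' : (P:ℂ)*(2*(i:ℂ)+1) + (P:ℂ)^2*(k:ℂ) = 2*(m:ℂ) := by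
        have h := congrArg (fun z : ℤ => (z : ℂ)) hm
        push_cast at h; linear_combination h
      have hE : Complex.I * (π : ℂ) * (2 * ((P*k+i : ℕ) : ℂ) + 1) ^ 2 / (4 * (k : ℂ))
          = Complex.I * (π : ℂ) * (2 * (i : ℂ) + 1) ^ 2 / (4 * (k : ℂ)) + (m:ℂ) * (2*(π:ℂ)*Complex.I) := by
        push_cast
        field_simp
        linear_combination (4*(k:ℂ)) * hm'
      rw [hE, Complex.exp_add, Complex.exp_int_mul_two_pi_mul_I, mul_one]
    have hblocks : ∀ P : ℕ, ∑ i ∈ Finset.range (P*k),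
        Complex.exp (Complex.I * (π : ℂ) * (2 * (i : ℂ) + 1) ^ 2 / (4 * (k : ℂ)))
        = (P:ℂ) * ∑ i ∈ Finset.range k,
          Complex.exp (Complex.I * (π : ℂ) * (2 * (i : ℂ) + 1) ^ 2 / (4 * (k : ℂ))) := by
      intro P
      induction P with
      | zero => simp
      | succ P ih =>
        rw [show (P+1)*k = P*k + k by ring, Finset.sum_range_add, ih]
        have : ∀ i ∈ Finset.range k,
            Complex.exp (Complex.I * (π : ℂ) * (2 * ((P*k+i : ℕ) : ℂ) + 1) ^ 2 / (4 * (k : ℂ)))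
            = Complex.exp (Complex.I * (π : ℂ) * (2 * (i : ℂ) + 1) ^ 2 / (4 * (k : ℂ))) :=
          fun i _ => hper P i
        rw [Finset.sum_congr rfl this]
        push_cast
        ring
    rw [hIcc, hblocks p]
    have hcore : ∑ i ∈ Finset.range k,
        Complex.exp (Complex.I * (π : ℂ) * (2 * (i : ℂ) + 1) ^ 2 / (4 * (k : ℂ)))
        = (1 + Complex.I) * (Real.sqrt (2*(k:ℝ)) : ℂ) / 2 := by
      rw [← gs_core k hko hk]
      refine Finset.sum_congr rfl fun i _ => ?_
      congr 1
      ring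
    rw [hcore, hko.neg_one_pow]
    ring


end GaussSumMain
end
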